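/- arXiv:1410.7046 — 4 statements merged into one kernel-verified Lean document; each statement's English description precedes it below -/
import Mathlib

section
/- Let H be a prime tournament and let c > 0 and ε > 0. If every H-free tournament T satisfies tr(T) ≥ c·|T|^ε, then every H-free tournament T satisfies tr(T) ≥ |T|^ε. -/
open Finset

attribute [local instance] Classical.propDecidable

/-- A tournament on vertex set `Fin n`: for every pair of distinct vertices exactly one
direction is present, and no vertex is adjacent to itself. -/
structure Tournament where
  n : ℕ
  adj : Fin n → Fin n → Prop
  asymm : ∀ u v, adj u v → ¬ adj v u
  total : ∀ u v, u ≠ v → adj u v ∨ adj v u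

namespace Tournament

/-- `S` is a transitive set: the adjacency relation restricted to `S` is a strict linear
order (by the tournament axioms this is equivalent to transitivity on `S`). -/
def IsTransitiveSet (T : Tournament) (S : Finset (Fin T.n)) : Prop :=
  ∀ a ∈ S, ∀ b ∈ S, ∀ c ∈ S, T.adj a b → T.adj b c → T.adj a c

/-- `tr T`: the maximum size of a transitive subset of the vertices of `T`. -/
noncomputable def transNum (T : Tournament) : ℕ :=
  sSup {m | ∃ S : Finset (Fin T.n), T.IsTransitiveSet S ∧ S.card = m}

/-- `T` contains an induced copy of `H`. -/
def Contains (T H : Tournament) : Prop :=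
  ∃ f : Fin H.n → Fin T.n, Function.Injective f ∧
    ∀ u v : Fin H.n, H.adj u v ↔ T.adj (f u) (f v)

/-- `T` is `H`-free: no set of vertices of `T` induces a subtournament isomorphic to `H`. -/
def HFree (T H : Tournament) : Prop := ¬ T.Contains H

/-- `S` is a homogeneous set of `T`. -/
def IsHomogeneous (T : Tournament) (S : Finset (Fin T.n)) : Prop :=
  ∀ v, v ∉ S → (∀ s ∈ S, T.adj v s) ∨ (∀ s ∈ S, T.adj s v)

/-- A tournament is prime if it has no nontrivial homogeneous set. -/
def IsPrime (T : Tournament) : Prop :=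
  ¬ ∃ S : Finset (Fin T.n), T.IsHomogeneous S ∧ 1 < S.card ∧ S.card < T.n

/-- The backward-edge graph of `T` under the ordering `σ` (where `σ p` is the vertex in
position `p`): `u` and `v` are joined iff the tournament edge between them goes from the
later position to the earlier one. -/
def backAdj (T : Tournament) (σ : Equiv.Perm (Fin T.n)) (u v : Fin T.n) : Prop :=
  (σ.symm u < σ.symm v ∧ T.adj v u) ∨ (σ.symm v < σ.symm u ∧ T.adj u v)

/-- `σ` is a galaxy ordering of `T` with center assignment `ctr` (mapping each vertex to the
center of its star component, centers and singletons being fixed points): every backward edge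
joins a leaf to its center, each star is a left star or a right star, and no center of a star
lies between two leaves of another star. -/
def IsGalaxyOrdering (T : Tournament) (σ : Equiv.Perm (Fin T.n))
    (ctr : Fin T.n → Fin T.n) : Prop :=
  (∀ v, ctr (ctr v) = ctr v) ∧
  (∀ v, ctr v ≠ v → T.backAdj σ v (ctr v)) ∧
  (∀ u v, T.backAdj σ u v → (ctr u = u ∧ ctr v = u) ∨ (ctr v = v ∧ ctr u = v)) ∧
  (∀ c, ctr c = c →
    (∀ v, ctr v = c → v = c ∨ σ.symm v < σ.symm c) ∨
    (∀ v, ctr v = c → v = c ∨ σ.symm c < σ.symm v)) ∧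
  (∀ c, ctr c = c → (∃ v, v ≠ c ∧ ctr v = c) →
    ∀ l₁ l₂, l₁ ≠ ctr l₁ → l₂ ≠ ctr l₂ → ctr l₁ = ctr l₂ → ctr l₁ ≠ c →
      ¬ (σ.symm l₁ < σ.symm c ∧ σ.symm c < σ.symm l₂))

/-- A tournament is a galaxy if it admits a galaxy ordering. -/
def IsGalaxy (T : Tournament) : Prop := ∃ σ ctr, T.IsGalaxyOrdering σ ctr

/-- A tournament is a star: it has an ordering of its vertices under which the backward-edge
graph is connected and is a star `K_{1,t}` whose center comes before all its leaves or after
all its leaves. -/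
def IsStar (T : Tournament) : Prop :=
  ∃ (σ : Equiv.Perm (Fin T.n)) (c : Fin T.n),
    (∀ v, v ≠ c → T.backAdj σ c v) ∧
    (∀ u v, T.backAdj σ u v → u = c ∨ v = c) ∧
    ((∀ v, v ≠ c → σ.symm c < σ.symm v) ∨ (∀ v, v ≠ c → σ.symm v < σ.symm c))

/-- `P` is a partition of the vertex set of `T` into transitive sets. -/
def IsTransPartition (T : Tournament) (P : Finset (Finset (Fin T.n))) : Prop :=
  (∀ S ∈ P, T.IsTransitiveSet S) ∧ ∀ v : Fin T.n, ∃! S, S ∈ P ∧ v ∈ S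

/-- The chromatic number of `T`: the least number of parts in a partition of the vertices of
`T` into transitive sets. -/
noncomputable def chromaticNum (T : Tournament) : ℕ :=
  sInf {m | ∃ P : Finset (Finset (Fin T.n)), T.IsTransPartition P ∧ P.card = m}

/-- The directed density from `X` to `Y`. -/
noncomputable def density (T : Tournament) (X Y : Finset (Fin T.n)) : ℝ :=
  (((X ×ˢ Y).filter fun p => T.adj p.1 p.2).card : ℝ) / ((X.card : ℝ) * (Y.card : ℝ))

/-- Common part of the definitions of l-sequences and m-sequences: pairwise disjoint
nonempty sets with density at least `1 - lam` forwards. -/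
def SeqBase (T : Tournament) (lam : ℝ) (m : ℕ) (S : Fin m → Finset (Fin T.n)) : Prop :=
  (∀ i, (S i).Nonempty) ∧ (∀ i j, i ≠ j → Disjoint (S i) (S j)) ∧
  ∀ i j : Fin m, i < j → 1 - lam ≤ T.density (S i) (S j)

/-- A `(c, lam)`-l-sequence: every set is `c`-linear. -/
def IsLSeq (T : Tournament) (c lam : ℝ) (m : ℕ) (S : Fin m → Finset (Fin T.n)) : Prop :=
  T.SeqBase lam m S ∧ ∀ i, c * (T.n : ℝ) ≤ ((S i).card : ℝ)

/-- A `(c₁, c₂, lam, eps)`-m-sequence: sets in odd positions (even `0`-based indices) are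
`c₂`-linear, sets in even positions are transitive and `(c₁, eps)`-big. -/
def IsMSeq (T : Tournament) (c₁ c₂ lam eps : ℝ) (m : ℕ)
    (S : Fin m → Finset (Fin T.n)) : Prop :=
  T.SeqBase lam m S ∧
  (∀ i : Fin m, (i : ℕ) % 2 = 0 → c₂ * (T.n : ℝ) ≤ ((S i).card : ℝ)) ∧
  (∀ i : Fin m, (i : ℕ) % 2 = 1 →
    T.IsTransitiveSet (S i) ∧ c₁ * (T.n : ℝ) ^ eps ≤ ((S i).card : ℝ))

/-- A sequence of sets is smooth if the `1 - lam` density condition holds pointwise. -/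
def Smooth (T : Tournament) (lam : ℝ) (m : ℕ) (S : Fin m → Finset (Fin T.n)) : Prop :=
  ∀ i j : Fin m, i < j →
    (∀ v ∈ S i, 1 - lam ≤ T.density {v} (S j)) ∧
    (∀ v ∈ S j, 1 - lam ≤ T.density (S i) {v})

/-- `P` is a partition of the vertex set of `T` into homogeneous sets. -/
def IsHomogeneousPartition (T : Tournament) (P : Finset (Finset (Fin T.n))) : Prop :=
  (∀ A ∈ P, A.Nonempty ∧ T.IsHomogeneous A) ∧ ∀ v : Fin T.n, ∃! A, A ∈ P ∧ v ∈ A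

/-- `p T`: the least number of parts of a nontrivial homogeneous partition. -/
noncomputable def partNum (T : Tournament) : ℕ :=
  sInf {m | ∃ P : Finset (Finset (Fin T.n)),
    T.IsHomogeneousPartition P ∧ 1 < P.card ∧ P.card = m}

/-- `T` is `H`-far: for every nontrivial homogeneous partition `P` of the vertices of `H`,
`T` contains no subtournament isomorphic to the quotient tournament `H_P`. -/
def HFar (T H : Tournament) : Prop :=
  ∀ P : Finset (Finset (Fin H.n)), H.IsHomogeneousPartition P → 1 < P.card →
    ¬ ∃ g : {A // A ∈ P} → Fin T.n, Function.Injective g ∧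
        ∀ A B : {A // A ∈ P}, A ≠ B →
          ((∀ a ∈ A.1, ∀ b ∈ B.1, H.adj a b) ↔ T.adj (g A) (g B))

-- ===== auxiliary material =====

lemma adj_irrefl (T : Tournament) (v : Fin T.n) : ¬ T.adj v v :=
  fun h => T.asymm v v h h

lemma transNum_bdd (T : Tournament) :
    BddAbove {m | ∃ S : Finset (Fin T.n), T.IsTransitiveSet S ∧ S.card = m} := by
  refine ⟨T.n, ?_⟩
  rintro m ⟨S, -, rfl⟩
  simpa using S.card_le_univ

lemma le_transNum (T : Tournament) (S : Finset (Fin T.n)) (hS : T.IsTransitiveSet S) :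
    S.card ≤ T.transNum :=
  le_csSup T.transNum_bdd ⟨S, hS, rfl⟩

lemma transNum_spec (T : Tournament) :
    ∃ S : Finset (Fin T.n), T.IsTransitiveSet S ∧ S.card = T.transNum := by
  have h0 : 0 ∈ {m | ∃ S : Finset (Fin T.n), T.IsTransitiveSet S ∧ S.card = m} :=
    ⟨∅, by intro a ha; simp at ha, by simp⟩
  exact Nat.sSup_mem ⟨0, h0⟩ T.transNum_bdd

lemma one_le_transNum (T : Tournament) (h : 0 < T.n) : 1 ≤ T.transNum := by
  have := T.le_transNum {⟨0, h⟩} (by intro a ha b hb c hc hab hbc; simp_all)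
  simpa using this

def prodT (A B : Tournament) : Tournament where
  n := A.n * B.n
  adj u v :=
    ((finProdFinEquiv.symm u).1 = (finProdFinEquiv.symm v).1 ∧
      B.adj (finProdFinEquiv.symm u).2 (finProdFinEquiv.symm v).2) ∨
    ((finProdFinEquiv.symm u).1 ≠ (finProdFinEquiv.symm v).1 ∧
      A.adj (finProdFinEquiv.symm u).1 (finProdFinEquiv.symm v).1)
  asymm := by
    rintro u v (⟨h1, h2⟩ | ⟨h1, h2⟩) (⟨g1, g2⟩ | ⟨g1, g2⟩)
    · exact B.asymm _ _ h2 g2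
    · exact g1 h1.symm
    · exact h1 g1.symm
    · exact A.asymm _ _ h2 g2
  total := by
    intro u v huv
    by_cases h : (finProdFinEquiv.symm u).1 = (finProdFinEquiv.symm v).1
    · have h2 : (finProdFinEquiv.symm u).2 ≠ (finProdFinEquiv.symm v).2 := by
        intro h2
        exact huv (finProdFinEquiv.symm.injective (Prod.ext h h2))
      rcases B.total _ _ h2 with hb | hb
      · exact Or.inl (Or.inl ⟨h, hb⟩)
      · exact Or.inr (Or.inl ⟨h.symm, hb⟩)
    · rcases A.total _ _ h with ha | ha
      · exact Or.inl (Or.inr ⟨h, ha⟩)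
      · exact Or.inr (Or.inr ⟨Ne.symm h, ha⟩)

lemma prod_adj_ne {A B : Tournament} {u v : Fin (A.n * B.n)}
    (h : (finProdFinEquiv.symm u).1 ≠ (finProdFinEquiv.symm v).1) :
    (prodT A B).adj u v ↔ A.adj (finProdFinEquiv.symm u).1 (finProdFinEquiv.symm v).1 := by
  constructor
  · rintro (⟨h1, -⟩ | ⟨-, h2⟩)
    · exact absurd h1 h
    · exact h2
  · intro ha; exact Or.inr ⟨h, ha⟩

lemma prod_adj_eq {A B : Tournament} {u v : Fin (A.n * B.n)}
    (h : (finProdFinEquiv.symm u).1 = (finProdFinEquiv.symm v).1) :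
    (prodT A B).adj u v ↔ B.adj (finProdFinEquiv.symm u).2 (finProdFinEquiv.symm v).2 := by
  constructor
  · rintro (⟨-, h1⟩ | ⟨h2, -⟩)
    · exact h1
    · exact absurd h h2
  · intro hb; exact Or.inl ⟨h, hb⟩

lemma transNum_prod (A B : Tournament) :
    (prodT A B).transNum ≤ A.transNum * B.transNum := by
  obtain ⟨S, hS, hcard⟩ := (prodT A B).transNum_spec
  rw [← hcard]
  set π : Fin (A.n * B.n) → Fin A.n := fun v => (finProdFinEquiv.symm v).1 with hπ
  set τ : Fin (A.n * B.n) → Fin B.n := fun v => (finProdFinEquiv.symm v).2 with hτ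
  have himg : (S.image π).card ≤ A.transNum := by
    apply A.le_transNum
    intro a ha b hb cc hc hab hbc
    obtain ⟨u, hu, rfl⟩ := mem_image.mp ha
    obtain ⟨v, hv, rfl⟩ := mem_image.mp hb
    obtain ⟨w, hw, rfl⟩ := mem_image.mp hc
    have h1 : π u ≠ π v := fun h => A.adj_irrefl _ (h ▸ hab)
    have h2 : π v ≠ π w := fun h => A.adj_irrefl _ (h ▸ hbc)
    have huv : (prodT A B).adj u v := (prod_adj_ne h1).mpr hab
    have hvw : (prodT A B).adj v w := (prod_adj_ne h2).mpr hbc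
    have huw := hS u hu v hv w hw huv hvw
    by_cases h3 : π u = π w
    · exact absurd (h3 ▸ hab) fun h => A.asymm _ _ h hbc
    · exact (prod_adj_ne h3).mp huw
  have hfib : ∀ a ∈ S.image π, (S.filter fun x => π x = a).card ≤ B.transNum := by
    intro a _
    set F := S.filter fun x => π x = a with hF
    have hFa : ∀ x ∈ F, π x = a := fun x hx => (mem_filter.mp hx).2
    have hFS : ∀ x ∈ F, x ∈ S := fun x hx => (mem_filter.mp hx).1
    have hinj : Set.InjOn τ F := by
      intro x hx y hy hxy
      apply finProdFinEquiv.symm.injective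
      exact Prod.ext (by rw [show (finProdFinEquiv.symm x).1 = π x from rfl,
        show (finProdFinEquiv.symm y).1 = π y from rfl, hFa x hx, hFa y hy]) hxy
    rw [← Finset.card_image_of_injOn hinj]
    apply B.le_transNum
    intro x hx y hy z hz hxy hyz
    obtain ⟨u, hu, rfl⟩ := mem_image.mp hx
    obtain ⟨v, hv, rfl⟩ := mem_image.mp hy
    obtain ⟨w, hw, rfl⟩ := mem_image.mp hz
    have e1 : π u = π v := by rw [hFa u hu, hFa v hv]
    have e2 : π v = π w := by rw [hFa v hv, hFa w hw]
    have huv : (prodT A B).adj u v := (prod_adj_eq e1).mpr hxy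
    have hvw : (prodT A B).adj v w := (prod_adj_eq e2).mpr hyz
    have huw := hS u (hFS u hu) v (hFS v hv) w (hFS w hw) huv hvw
    exact (prod_adj_eq (e1.trans e2)).mp huw
  calc S.card = ∑ a ∈ S.image π, (S.filter fun x => π x = a).card :=
        Finset.card_eq_sum_card_image π S
    _ ≤ (S.image π).card • B.transNum := Finset.sum_le_card_nsmul _ _ _ hfib
    _ = (S.image π).card * B.transNum := by rw [smul_eq_mul]
    _ ≤ A.transNum * B.transNum := Nat.mul_le_mul_right _ himg

lemma hfree_prod (H A B : Tournament) (hprime : H.IsPrime)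
    (hA : A.HFree H) (hB : B.HFree H) : (prodT A B).HFree H := by
  rintro ⟨f, hinj, hadj⟩
  set π : Fin H.n → Fin A.n := fun v => (finProdFinEquiv.symm (f v)).1 with hπ
  set τ : Fin H.n → Fin B.n := fun v => (finProdFinEquiv.symm (f v)).2 with hτ
  by_cases hinjπ : Function.Injective π
  · refine hA ⟨π, hinjπ, fun u v => ?_⟩
    by_cases huv : u = v
    · subst huv
      exact iff_of_false (H.adj_irrefl u) (A.adj_irrefl (π u))
    · rw [hadj u v, prod_adj_ne (fun h => huv (hinjπ h))]
  · rw [Function.not_injective_iff] at hinjπ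
    obtain ⟨u, v, hpuv, huv⟩ := hinjπ
    set a := π u with ha
    set C : Finset (Fin H.n) := Finset.univ.filter fun w => π w = a with hC
    have hmemC : ∀ w, w ∈ C ↔ π w = a := by intro w; simp [hC]
    have hhom : H.IsHomogeneous C := by
      intro w hw
      have hwa : π w ≠ a := fun h => hw ((hmemC w).mpr h)
      rcases A.total (π w) a hwa with h | h
      · left; intro s hs
        have hsa : π s = a := (hmemC s).mp hs
        rw [hadj, prod_adj_ne (show π w ≠ π s by rw [hsa]; exact hwa)]
        rw [show (finProdFinEquiv.symm (f s)).1 = π s from rfl, hsa]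
        exact h
      · right; intro s hs
        have hsa : π s = a := (hmemC s).mp hs
        rw [hadj, prod_adj_ne (show π s ≠ π w by rw [hsa]; exact fun h' => hwa h'.symm)]
        rw [show (finProdFinEquiv.symm (f s)).1 = π s from rfl, hsa]
        exact h
    have h2 : 2 ≤ C.card := by
      have hsub : ({u, v} : Finset (Fin H.n)) ⊆ C := by
        intro x hx
        rcases Finset.mem_insert.mp hx with rfl | hx
        · exact (hmemC x).mpr rfl
        · rw [Finset.mem_singleton] at hx
          subst hx
          exact (hmemC x).mpr hpuv.symm
      calc 2 = ({u, v} : Finset (Fin H.n)).card := (Finset.card_pair huv).symm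
        _ ≤ C.card := Finset.card_le_card hsub
    have hnotn : ¬ C.card < H.n := fun hlt => hprime ⟨C, hhom, lt_of_lt_of_le one_lt_two h2, hlt⟩
    have hCle : C.card ≤ H.n := by simpa using C.card_le_univ
    have hCuniv : C = Finset.univ :=
      Finset.eq_univ_of_card _ (by rw [Fintype.card_fin]; exact le_antisymm hCle (not_lt.mp hnotn))
    have hall : ∀ w, π w = a := fun w => (hmemC w).mp (hCuniv ▸ Finset.mem_univ w)
    have hτinj : Function.Injective τ := by
      intro x y hxy
      apply hinj
      apply finProdFinEquiv.symm.injective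
      exact Prod.ext (by rw [show (finProdFinEquiv.symm (f x)).1 = π x from rfl,
        show (finProdFinEquiv.symm (f y)).1 = π y from rfl, hall x, hall y]) hxy
    refine hB ⟨τ, hτinj, fun x y => ?_⟩
    rw [hadj, prod_adj_eq (show (finProdFinEquiv.symm (f x)).1 = (finProdFinEquiv.symm (f y)).1 by
      rw [show (finProdFinEquiv.symm (f x)).1 = π x from rfl,
        show (finProdFinEquiv.symm (f y)).1 = π y from rfl, hall x, hall y])]

def Tpow (T : Tournament) : ℕ → Tournament
  | 0 => T
  | k + 1 => prodT (Tpow T k) T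

lemma Tpow_n (T : Tournament) (k : ℕ) : (Tpow T k).n = T.n ^ (k + 1) := by
  induction k with
  | zero => simp [Tpow]
  | succ k ih => rw [Tpow, show (prodT (Tpow T k) T).n = (Tpow T k).n * T.n from rfl, ih]; ring

lemma Tpow_hfree (H T : Tournament) (hprime : H.IsPrime) (hT : T.HFree H) (k : ℕ) :
    (Tpow T k).HFree H := by
  induction k with
  | zero => exact hT
  | succ k ih => exact hfree_prod H _ T hprime ih hT

lemma Tpow_trans (T : Tournament) (k : ℕ) :
    (Tpow T k).transNum ≤ T.transNum ^ (k + 1) := by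
  induction k with
  | zero => simp [Tpow]
  | succ k ih =>
    calc (Tpow T (k + 1)).transNum ≤ (Tpow T k).transNum * T.transNum := transNum_prod _ _
      _ ≤ T.transNum ^ (k + 1) * T.transNum := Nat.mul_le_mul_right _ ih
      _ = T.transNum ^ (k + 2) := (pow_succ _ _).symm

end Tournament

open Tournament

/-- Let H be a prime tournament and c, ε > 0. If every H-free tournament T
satisfies tr(T) ≥ c·|T|^ε, then every H-free tournament T satisfies tr(T) ≥ |T|^ε. -/
theorem stmt4 (H : Tournament) (hprime : H.IsPrime) (c eps : ℝ) (hc : 0 < c) (he : 0 < eps)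
    (hyp : ∀ T : Tournament, T.HFree H → c * (T.n : ℝ) ^ eps ≤ (T.transNum : ℝ)) :
    ∀ T : Tournament, T.HFree H → (T.n : ℝ) ^ eps ≤ (T.transNum : ℝ) := by
  intro T hT
  rcases Nat.eq_zero_or_pos T.n with h0 | hpos
  · rw [h0]
    simp [Real.zero_rpow he.ne']
  · by_contra hcon
    push_neg at hcon
    have ht1 : 1 ≤ T.transNum := T.one_le_transNum hpos
    have htpos : (0 : ℝ) < (T.transNum : ℝ) := by exact_mod_cast ht1
    set x : ℝ := (T.n : ℝ) ^ eps with hx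
    have hnpos : (0 : ℝ) < (T.n : ℝ) := by exact_mod_cast hpos
    have hxpos : 0 < x := Real.rpow_pos_of_pos hnpos _
    have key : ∀ k : ℕ, c * x ^ (k + 1) ≤ (T.transNum : ℝ) ^ (k + 1) := by
      intro k
      have h1 := hyp (Tpow T k) (Tpow_hfree H T hprime hT k)
      rw [Tpow_n] at h1
      have h2 : ((T.n ^ (k + 1) : ℕ) : ℝ) ^ eps = x ^ (k + 1) := by
        rw [Nat.cast_pow, ← Real.rpow_natCast ((T.n : ℝ)) (k + 1),
          ← Real.rpow_mul hnpos.le, mul_comm, Real.rpow_mul hnpos.le, Real.rpow_natCast]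
      rw [h2] at h1
      refine h1.trans ?_
      exact_mod_cast Tpow_trans T k
    set r : ℝ := x / (T.transNum : ℝ) with hr
    have hr1 : 1 < r := (one_lt_div htpos).mpr hcon
    obtain ⟨k, hk⟩ := pow_unbounded_of_one_lt (1 / c) hr1
    have hk1 : 1 / c < r ^ (k + 1) := hk.trans_le (pow_le_pow_right₀ hr1.le k.le_succ)
    have h3 : c * r ^ (k + 1) ≤ 1 := by
      rw [hr, div_pow, mul_div_assoc']
      exact (div_le_one (by positivity)).mpr (key k)
    have h4 : r ^ (k + 1) ≤ 1 / c := by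
      rw [le_div_iff₀ hc, mul_comm]
      exact h3
    linarith
end

section
/- There exists a constant C > 0 such that for every ε ∈ (0,1] and every tournament T on n ≥ 2 vertices with the property that every nonempty subset S ⊆ V(T) contains a transitive subset of size at least |S|^ε, the vertex set V(T) can be partitioned into at most C · n^(1−ε) · log n transitive sets. -/
open Finset

attribute [local instance] Classical.propDecidable

open Tournament

lemma harm_le (n : ℕ) (hn : 1 ≤ n) :
    ∑ k ∈ Finset.range n, (1 : ℝ) / ((k : ℝ) + 1) ≤ 1 + Real.log n := by
  induction n with
  | zero => omega
  | succ m ih =>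
    rcases Nat.eq_or_lt_of_le hn with h | h
    · simp [← h]
    · have hm : 1 ≤ m := by omega
      have hmpos : (0:ℝ) < m := by exact_mod_cast hm
      have key : (1:ℝ) / ((m:ℝ) + 1) ≤ Real.log (m+1) - Real.log m := by
        have h1 : Real.log ((m:ℝ) / ((m:ℝ)+1)) ≤ (m:ℝ)/((m:ℝ)+1) - 1 :=
          Real.log_le_sub_one_of_pos (by positivity)
        have h2 : Real.log ((m:ℝ) / ((m:ℝ)+1)) = Real.log m - Real.log (m+1) :=
          Real.log_div (by positivity) (by positivity)
        have h3 : (m:ℝ)/((m:ℝ)+1) - 1 = -(1/((m:ℝ)+1)) := by field_simp; ring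
        rw [h2, h3] at h1; linarith
      rw [Finset.sum_range_succ]
      have := ih hm
      push_cast
      linarith

/-- There exists a constant C > 0 such that for every ε ∈ (0,1] and every
tournament T on n ≥ 2 vertices in which every nonempty subset S of vertices contains a
transitive subset of size at least |S|^ε, the vertex set of T can be partitioned into at
most C · n^(1−ε) · log n transitive sets. -/
theorem stmt6 :
    ∃ C : ℝ, 0 < C ∧
      ∀ eps : ℝ, 0 < eps → eps ≤ 1 →
        ∀ T : Tournament, 2 ≤ T.n →
          (∀ S : Finset (Fin T.n), S.Nonempty →
            ∃ S' ⊆ S, T.IsTransitiveSet S' ∧ (S.card : ℝ) ^ eps ≤ (S'.card : ℝ)) →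
          ∃ P : Finset (Finset (Fin T.n)), T.IsTransPartition P ∧
            (P.card : ℝ) ≤ C * (T.n : ℝ) ^ ((1 : ℝ) - eps) * Real.log (T.n : ℝ) := by
  refine ⟨3, by norm_num, ?_⟩
  intro eps heps heps1 T hn hyp
  have key : ∀ m : ℕ, ∀ S : Finset (Fin T.n), S.card ≤ m →
      ∃ P : Finset (Finset (Fin T.n)),
        (∀ A ∈ P, T.IsTransitiveSet A ∧ A ⊆ S ∧ A.Nonempty) ∧
        (∀ A ∈ P, ∀ B ∈ P, A ≠ B → Disjoint A B) ∧
        (∀ v ∈ S, ∃ A ∈ P, v ∈ A) ∧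
        (P.card : ℝ) ≤ ∑ k ∈ Finset.range S.card, ((k : ℝ) + 1) ^ (-eps) := by
    intro m
    induction m with
    | zero =>
      intro S hS
      have : S = ∅ := Finset.card_eq_zero.mp (Nat.le_zero.mp hS)
      subst this
      exact ⟨∅, by simp, by simp, by simp, by simp⟩
    | succ m ih =>
      intro S hS
      rcases S.eq_empty_or_nonempty with rfl | hSne
      · exact ⟨∅, by simp, by simp, by simp, by simp⟩
      obtain ⟨S', hS'sub, hS'trans, hS'card⟩ := hyp S hSne
      have hs1 : 1 ≤ S.card := Finset.card_pos.mpr hSne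
      have hs1R : (1:ℝ) ≤ (S.card : ℝ) := by exact_mod_cast hs1
      have hspos : (0:ℝ) < (S.card : ℝ) := by linarith
      have h1le : (1:ℝ) ≤ (S'.card : ℝ) := by
        calc (1:ℝ) = (1:ℝ) ^ eps := (Real.one_rpow eps).symm
        _ ≤ (S.card : ℝ) ^ eps := Real.rpow_le_rpow (by norm_num) hs1R heps.le
        _ ≤ (S'.card : ℝ) := hS'card
      have ht1 : 1 ≤ S'.card := by exact_mod_cast h1le
      have hS'ne : S'.Nonempty := Finset.card_pos.mp ht1
      set S₂ := S \ S' with hS₂def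
      have hcard₂ : S₂.card = S.card - S'.card := Finset.card_sdiff_of_subset hS'sub
      have htle : S'.card ≤ S.card := Finset.card_le_card hS'sub
      have hlt : S₂.card < S.card := by omega
      obtain ⟨P₂, hP₂a, hP₂b, hP₂c, hP₂d⟩ := ih S₂ (by omega)
      have hS'notin : S' ∉ P₂ := by
        intro h
        obtain ⟨x, hx⟩ := hS'ne
        have := (hP₂a S' h).2.1 hx
        exact (Finset.mem_sdiff.mp this).2 hx
      refine ⟨insert S' P₂, ?_, ?_, ?_, ?_⟩
      · intro A hA
        rcases Finset.mem_insert.mp hA with rfl | hA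
        · exact ⟨hS'trans, hS'sub, hS'ne⟩
        · obtain ⟨h1, h2, h3⟩ := hP₂a A hA
          exact ⟨h1, h2.trans (Finset.sdiff_subset), h3⟩
      · have hdisj : ∀ A ∈ P₂, Disjoint S' A := by
          intro A hA
          exact Finset.disjoint_left.mpr fun x hx hx' =>
            (Finset.mem_sdiff.mp ((hP₂a A hA).2.1 hx')).2 hx
        intro A hA B hB hAB
        rcases Finset.mem_insert.mp hA with h1 | h1
        · rcases Finset.mem_insert.mp hB with h2 | h2
          · exact absurd (h1.trans h2.symm) hAB
          · rw [h1]; exact hdisj B h2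
        · rcases Finset.mem_insert.mp hB with h2 | h2
          · rw [h2]; exact (hdisj A h1).symm
          · exact hP₂b A h1 B h2 hAB
      · intro v hv
        by_cases hvS' : v ∈ S'
        · exact ⟨S', Finset.mem_insert_self _ _, hvS'⟩
        · obtain ⟨A, hA, hvA⟩ := hP₂c v (Finset.mem_sdiff.mpr ⟨hv, hvS'⟩)
          exact ⟨A, Finset.mem_insert_of_mem hA, hvA⟩
      · rw [Finset.card_insert_of_notMem hS'notin]
        have hsplit : ∑ k ∈ Finset.range S.card, ((k : ℝ) + 1) ^ (-eps)
            = ∑ k ∈ Finset.range S₂.card, ((k : ℝ) + 1) ^ (-eps)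
              + ∑ k ∈ Finset.Ico S₂.card S.card, ((k : ℝ) + 1) ^ (-eps) := by
          rw [Finset.range_eq_Ico,
            ← Finset.sum_Ico_consecutive _ (Nat.zero_le _) hlt.le, Finset.range_eq_Ico]
        have hterm : ∀ k ∈ Finset.Ico S₂.card S.card,
            (S.card : ℝ) ^ (-eps) ≤ ((k : ℝ) + 1) ^ (-eps) := by
          intro k hk
          obtain ⟨_, hk2⟩ := Finset.mem_Ico.mp hk
          have : ((k:ℝ) + 1) ≤ (S.card : ℝ) := by exact_mod_cast hk2
          exact Real.rpow_le_rpow_of_nonpos (by positivity) this (by linarith)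
        have hsum_ge : (1:ℝ) ≤ ∑ k ∈ Finset.Ico S₂.card S.card, ((k : ℝ) + 1) ^ (-eps) := by
          have h1 : ((Finset.Ico S₂.card S.card).card : ℝ) * (S.card : ℝ) ^ (-eps)
              ≤ ∑ k ∈ Finset.Ico S₂.card S.card, ((k : ℝ) + 1) ^ (-eps) := by
            have := Finset.card_nsmul_le_sum (Finset.Ico S₂.card S.card)
              (fun k => ((k : ℝ) + 1) ^ (-eps)) ((S.card : ℝ) ^ (-eps)) hterm
            simpa [nsmul_eq_mul] using this
          have hcardIco : (Finset.Ico S₂.card S.card).card = S'.card := by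
            rw [Nat.card_Ico]; omega
          have h2 : (S.card : ℝ) ^ eps * (S.card : ℝ) ^ (-eps)
              ≤ ((S'.card : ℝ)) * (S.card : ℝ) ^ (-eps) := by
            apply mul_le_mul_of_nonneg_right hS'card (Real.rpow_nonneg hspos.le _)
          have h3 : (S.card : ℝ) ^ eps * (S.card : ℝ) ^ (-eps) = 1 := by
            rw [← Real.rpow_add hspos]; simp
          rw [hcardIco] at h1
          linarith
        rw [hsplit]
        push_cast
        linarith
  obtain ⟨P, hPa, hPb, hPc, hPd⟩ := key (Finset.univ : Finset (Fin T.n)).card Finset.univ le_rfl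
  have hcardU : (Finset.univ : Finset (Fin T.n)).card = T.n := by simp
  refine ⟨P, ⟨fun A hA => (hPa A hA).1, ?_⟩, ?_⟩
  · intro v
    obtain ⟨A, hA, hvA⟩ := hPc v (Finset.mem_univ v)
    refine ⟨A, ⟨hA, hvA⟩, ?_⟩
    rintro B ⟨hB, hvB⟩
    by_contra hne
    exact Finset.disjoint_left.mp (hPb B hB A hA hne) hvB hvA
  · -- numeric bound
    have hn1 : 1 ≤ T.n := by omega
    have hnR : (2:ℝ) ≤ (T.n : ℝ) := by exact_mod_cast hn
    have hnpos : (0:ℝ) < (T.n : ℝ) := by linarith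
    have hlog2 : (0.6931471803 : ℝ) < Real.log 2 := Real.log_two_gt_d9
    have hlogn : Real.log 2 ≤ Real.log (T.n : ℝ) := Real.log_le_log (by norm_num) hnR
    have step1 : (P.card : ℝ) ≤ ∑ k ∈ Finset.range T.n, ((k : ℝ) + 1) ^ (-eps) := by
      rw [hcardU] at hPd; exact hPd
    have step2 : ∑ k ∈ Finset.range T.n, ((k : ℝ) + 1) ^ (-eps)
        ≤ ∑ k ∈ Finset.range T.n, (T.n : ℝ) ^ ((1:ℝ) - eps) * (1 / ((k:ℝ) + 1)) := by
      apply Finset.sum_le_sum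
      intro k hk
      have hk1 : ((k:ℝ) + 1) ≤ (T.n : ℝ) := by
        have := Finset.mem_range.mp hk
        exact_mod_cast this
      have hkpos : (0:ℝ) < (k:ℝ) + 1 := by positivity
      have e1 : ((k : ℝ) + 1) ^ (-eps)
          = ((k:ℝ)+1) ^ ((1:ℝ) - eps) * (1 / ((k:ℝ) + 1)) := by
        rw [show ((1:ℝ) - eps) = -eps + 1 by ring, Real.rpow_add hkpos, Real.rpow_one]
        field_simp
      rw [e1]
      exact mul_le_mul_of_nonneg_right
        (Real.rpow_le_rpow hkpos.le hk1 (by linarith)) (by positivity)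
    have step3 : ∑ k ∈ Finset.range T.n, (T.n : ℝ) ^ ((1:ℝ) - eps) * (1 / ((k:ℝ) + 1))
        = (T.n : ℝ) ^ ((1:ℝ) - eps) * ∑ k ∈ Finset.range T.n, (1 / ((k:ℝ) + 1)) :=
      (Finset.mul_sum _ _ _).symm
    have step4 := harm_le T.n hn1
    have hrp : (0:ℝ) ≤ (T.n : ℝ) ^ ((1:ℝ) - eps) := Real.rpow_nonneg hnpos.le _
    have h5 : 1 + Real.log (T.n : ℝ) ≤ 3 * Real.log (T.n : ℝ) := by linarith
    calc (P.card : ℝ) ≤ ∑ k ∈ Finset.range T.n, ((k : ℝ) + 1) ^ (-eps) := step1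
      _ ≤ ∑ k ∈ Finset.range T.n, (T.n : ℝ) ^ ((1:ℝ) - eps) * (1 / ((k:ℝ) + 1)) := step2
      _ = (T.n : ℝ) ^ ((1:ℝ) - eps) * ∑ k ∈ Finset.range T.n, (1 / ((k:ℝ) + 1)) := step3
      _ ≤ (T.n : ℝ) ^ ((1:ℝ) - eps) * (1 + Real.log (T.n : ℝ)) :=
          mul_le_mul_of_nonneg_left step4 hrp
      _ ≤ (T.n : ℝ) ^ ((1:ℝ) - eps) * (3 * Real.log (T.n : ℝ)) :=
          mul_le_mul_of_nonneg_left h5 hrp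
      _ = 3 * (T.n : ℝ) ^ ((1:ℝ) - eps) * Real.log (T.n : ℝ) := by ring
end

section
/- Let t ≥ 1 and let T be a tournament on n vertices that contains a smooth (c,λ₀)-l-sequence of length 2t+1. Assume that every proper induced subtournament T|S (S ⊊ V(T)) satisfies tr(T|S) ≥ |S|^ε, where 0 < ε ≤ log(2)/log(2/c). Then T contains a smooth (1/4, c/2, λ, ε)-m-sequence of length 2t+1, where λ = 64·t²·(t+1)·λ₀. -/
open Finset

attribute [local instance] Classical.propDecidable

section Helpers

open Finset

variable {α : Type*}

lemma prodFilterSumLeft (X Y : Finset α) (R : α → α → Prop) :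
    ((X ×ˢ Y).filter fun p => R p.1 p.2).card = ∑ x ∈ X, (Y.filter fun y => R x y).card := by
  classical
  simp only [Finset.card_filter]
  rw [Finset.sum_product]

lemma prodFilterSumRight (X Y : Finset α) (R : α → α → Prop) :
    ((X ×ˢ Y).filter fun p => R p.1 p.2).card = ∑ y ∈ Y, (X.filter fun x => R x y).card := by
  classical
  simp only [Finset.card_filter]
  rw [Finset.sum_product_right]

lemma sumFilterComm (X Y : Finset α) (R : α → α → Prop) :
    ∑ x ∈ X, (Y.filter fun y => R x y).card = ∑ y ∈ Y, (X.filter fun x => R x y).card := by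
  classical
  rw [← prodFilterSumLeft, prodFilterSumRight]

lemma countBad (X : Finset α) (f : α → ℕ) (θ C M : ℝ) (hθ : 0 ≤ θ) (hC : 0 ≤ C)
    (hs : ∑ w ∈ X, (f w : ℝ) ≤ M) (hM : M ≤ θ * C) :
    ((X.filter fun w => θ < (f w : ℝ)).card : ℝ) ≤ C := by
  classical
  set bad := X.filter fun w => θ < (f w : ℝ) with hbad
  have h1 : (bad.card : ℝ) * θ ≤ ∑ w ∈ bad, (f w : ℝ) := by
    calc (bad.card : ℝ) * θ = ∑ _w ∈ bad, θ := by rw [Finset.sum_const, nsmul_eq_mul, mul_comm]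
    _ ≤ ∑ w ∈ bad, (f w : ℝ) := Finset.sum_le_sum fun w hw => le_of_lt (Finset.mem_filter.mp hw).2
  have h2 : ∑ w ∈ bad, (f w : ℝ) ≤ ∑ w ∈ X, (f w : ℝ) :=
    Finset.sum_le_sum_of_subset_of_nonneg (Finset.filter_subset _ _) (fun i _ _ => by positivity)
  rcases eq_or_lt_of_le hθ with h0 | h0
  · have hone : ∀ w ∈ bad, (1:ℝ) ≤ f w := fun w hw => by
      have h3 := (Finset.mem_filter.mp hw).2
      have h4 : 0 < f w := by rw [← h0] at h3; exact_mod_cast h3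
      exact_mod_cast h4
    have hb : (bad.card : ℝ) ≤ ∑ w ∈ bad, (f w : ℝ) := by
      calc (bad.card : ℝ) = ∑ _w ∈ bad, (1:ℝ) := by rw [Finset.sum_const, nsmul_eq_mul, mul_one]
      _ ≤ _ := Finset.sum_le_sum hone
    nlinarith
  · nlinarith

namespace Tournament

variable (T : Tournament)

lemma notAdjIff {u v : Fin T.n} (huv : u ≠ v) : ¬ T.adj u v ↔ T.adj v u := by
  constructor
  · intro h
    rcases T.total u v huv with h' | h'
    · exact absurd h' h
    · exact h'
  · exact fun h => fun h' => T.asymm u v h' h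

lemma crossCount (X Y : Finset (Fin T.n)) (hd : Disjoint X Y) :
    ((X ×ˢ Y).filter fun p => T.adj p.1 p.2).card
      + ((Y ×ˢ X).filter fun p => T.adj p.1 p.2).card = X.card * Y.card := by
  classical
  have hswap : ((X ×ˢ Y).filter fun p => ¬ T.adj p.1 p.2).card
      = ((Y ×ˢ X).filter fun p => T.adj p.1 p.2).card := by
    apply Finset.card_bij' (fun p _ => Prod.swap p) (fun p _ => Prod.swap p)
    · rintro ⟨a, b⟩ hp
      simp only [Finset.mem_filter, Finset.mem_product] at hp ⊢
      have hne : a ≠ b := fun h => (Finset.disjoint_left.mp hd hp.1.1) (h ▸ hp.1.2)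
      exact ⟨⟨hp.1.2, hp.1.1⟩, (T.notAdjIff hne).mp hp.2⟩
    · rintro ⟨a, b⟩ hp
      simp only [Finset.mem_filter, Finset.mem_product] at hp ⊢
      have hne : b ≠ a := by
        intro h
        subst h
        exact (Finset.disjoint_left.mp hd hp.1.2) hp.1.1
      exact ⟨⟨hp.1.2, hp.1.1⟩, (T.notAdjIff hne).mpr hp.2⟩
    · intro p _; rfl
    · intro p _; rfl
  rw [← hswap, Finset.card_filter_add_card_filter_not, Finset.card_product]

lemma densityOfBack (X Y : Finset (Fin T.n)) (hd : Disjoint X Y)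
    (hX : X.Nonempty) (hY : Y.Nonempty) (lam : ℝ)
    (h : (((Y ×ˢ X).filter fun p => T.adj p.1 p.2).card : ℝ) ≤ lam * X.card * Y.card) :
    1 - lam ≤ T.density X Y := by
  have hcross := T.crossCount X Y hd
  have hXc : (0:ℝ) < X.card := by exact_mod_cast Finset.card_pos.mpr hX
  have hYc : (0:ℝ) < Y.card := by exact_mod_cast Finset.card_pos.mpr hY
  have hfwd : ((1:ℝ) - lam) * (X.card * Y.card)
      ≤ (((X ×ˢ Y).filter fun p => T.adj p.1 p.2).card : ℝ) := by
    have : (((X ×ˢ Y).filter fun p => T.adj p.1 p.2).card : ℝ)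
        = (X.card : ℝ) * Y.card - ((Y ×ˢ X).filter fun p => T.adj p.1 p.2).card := by
      have h9 : (((X ×ˢ Y).filter fun p => T.adj p.1 p.2).card : ℝ)
          + ((Y ×ˢ X).filter fun p => T.adj p.1 p.2).card = (X.card : ℝ) * Y.card := by
        exact_mod_cast congrArg (Nat.cast (R := ℝ)) hcross
      linarith
    rw [this]
    nlinarith
  rw [density, le_div_iff₀ (by positivity)]
  nlinarith

lemma backOfDensitySingleLeft (v : Fin T.n) (Y : Finset (Fin T.n)) (hv : v ∉ Y)
    (lam : ℝ) (h : 1 - lam ≤ T.density {v} Y) :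
    ((Y.filter fun w => T.adj w v).card : ℝ) ≤ lam * Y.card := by
  classical
  rcases Y.eq_empty_or_nonempty with rfl | hY
  · simp
  have hYc : (0:ℝ) < Y.card := by exact_mod_cast Finset.card_pos.mpr hY
  have hd : Disjoint ({v} : Finset (Fin T.n)) Y := by simpa using hv
  have hcross := T.crossCount {v} Y hd
  have h1 : (({v} ×ˢ Y).filter fun p => T.adj p.1 p.2).card
      = (Y.filter fun y => T.adj v y).card := by
    rw [Finset.card_filter, Finset.sum_product, Finset.sum_singleton, ← Finset.card_filter]
  have h2 : ((Y ×ˢ {v}).filter fun p => T.adj p.1 p.2).card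
      = (Y.filter fun y => T.adj y v).card := by
    rw [Finset.card_filter, Finset.sum_product_right, Finset.sum_singleton, ← Finset.card_filter]
  rw [h1, h2, Finset.card_singleton, one_mul] at hcross
  have hfwd : ((1:ℝ) - lam) * Y.card ≤ ((Y.filter fun y => T.adj v y).card : ℝ) := by
    rw [density, h1] at h
    rw [Finset.card_singleton] at h
    push_cast at h
    rw [one_mul, le_div_iff₀ hYc] at h
    linarith
  have : ((Y.filter fun y => T.adj y v).card : ℝ)
      = (Y.card : ℝ) - (Y.filter fun y => T.adj v y).card := by
    have h9 : ((Y.filter fun y => T.adj v y).card : ℝ)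
        + (Y.filter fun y => T.adj y v).card = (Y.card : ℝ) := by
      exact_mod_cast congrArg (Nat.cast (R := ℝ)) hcross
    linarith
  rw [this]; nlinarith

lemma backOfDensitySingleRight (w : Fin T.n) (X : Finset (Fin T.n)) (hw : w ∉ X)
    (lam : ℝ) (h : 1 - lam ≤ T.density X {w}) :
    ((X.filter fun u => T.adj w u).card : ℝ) ≤ lam * X.card := by
  classical
  rcases X.eq_empty_or_nonempty with rfl | hX
  · simp
  have hXc : (0:ℝ) < X.card := by exact_mod_cast Finset.card_pos.mpr hX
  have hd : Disjoint X ({w} : Finset (Fin T.n)) := by simpa using hw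
  have hcross := T.crossCount X {w} hd
  have h1 : ((X ×ˢ {w}).filter fun p => T.adj p.1 p.2).card
      = (X.filter fun x => T.adj x w).card := by
    rw [Finset.card_filter, Finset.sum_product_right, Finset.sum_singleton, ← Finset.card_filter]
  have h2 : (({w} ×ˢ X).filter fun p => T.adj p.1 p.2).card
      = (X.filter fun x => T.adj w x).card := by
    rw [Finset.card_filter, Finset.sum_product, Finset.sum_singleton, ← Finset.card_filter]
  rw [h1, h2, Finset.card_singleton, mul_one] at hcross
  have hfwd : ((1:ℝ) - lam) * X.card ≤ ((X.filter fun x => T.adj x w).card : ℝ) := by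
    rw [density, h1] at h
    rw [Finset.card_singleton] at h
    push_cast at h
    rw [mul_one, le_div_iff₀ hXc] at h
    linarith
  have : ((X.filter fun x => T.adj w x).card : ℝ)
      = (X.card : ℝ) - (X.filter fun x => T.adj x w).card := by
    have h9 : ((X.filter fun x => T.adj x w).card : ℝ)
        + (X.filter fun x => T.adj w x).card = (X.card : ℝ) := by
      exact_mod_cast congrArg (Nat.cast (R := ℝ)) hcross
    linarith
  rw [this]; nlinarith

lemma densitySingleLeftOfBack (v : Fin T.n) (Y : Finset (Fin T.n)) (hv : v ∉ Y)
    (hY : Y.Nonempty) (lam : ℝ)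
    (h : ((Y.filter fun w => T.adj w v).card : ℝ) ≤ lam * Y.card) :
    1 - lam ≤ T.density {v} Y := by
  apply T.densityOfBack _ _ (by simpa using hv) ⟨v, Finset.mem_singleton_self v⟩ hY
  have h2 : ((Y ×ˢ {v}).filter fun p => T.adj p.1 p.2).card
      = (Y.filter fun y => T.adj y v).card := by
    rw [Finset.card_filter, Finset.sum_product_right, Finset.sum_singleton, ← Finset.card_filter]
  rw [h2, Finset.card_singleton]
  push_cast
  linarith

lemma densitySingleRightOfBack (w : Fin T.n) (X : Finset (Fin T.n)) (hw : w ∉ X)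
    (hX : X.Nonempty) (lam : ℝ)
    (h : ((X.filter fun u => T.adj w u).card : ℝ) ≤ lam * X.card) :
    1 - lam ≤ T.density X {w} := by
  apply T.densityOfBack _ _ (by simpa using hw) hX ⟨w, Finset.mem_singleton_self w⟩
  have h2 : (({w} ×ˢ X).filter fun p => T.adj p.1 p.2).card
      = (X.filter fun x => T.adj w x).card := by
    rw [Finset.card_filter, Finset.sum_product, Finset.sum_singleton, ← Finset.card_filter]
  rw [h2, Finset.card_singleton]
  push_cast
  linarith

lemma densityLeOne (X Y : Finset (Fin T.n)) : T.density X Y ≤ 1 := by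
  rw [density]
  apply div_le_one_of_le₀
  · have h1 : ((X ×ˢ Y).filter fun p => T.adj p.1 p.2).card ≤ X.card * Y.card := by
      calc ((X ×ˢ Y).filter fun p => T.adj p.1 p.2).card ≤ (X ×ˢ Y).card :=
            Finset.card_le_card (Finset.filter_subset _ _)
        _ = X.card * Y.card := Finset.card_product _ _
    exact_mod_cast h1
  · positivity

lemma transSubset {A B : Finset (Fin T.n)} (hBA : B ⊆ A) (hA : T.IsTransitiveSet A) :
    T.IsTransitiveSet B :=
  fun a ha b hb c hc hab hbc => hA a (hBA ha) b (hBA hb) c (hBA hc) hab hbc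

end Tournament

end Helpers

open Tournament
section Phase1

open Finset

set_option maxHeartbeats 2000000 in
lemma phase1 (T : Tournament) (t : ℕ) (ht : 1 ≤ t) (c lam₀ eps : ℝ) (hc : 0 < c)
    (hl0 : 0 ≤ lam₀) (heps0 : 0 < eps) (hn : 0 < T.n)
    (S : Fin (2 * t + 1) → Finset (Fin T.n))
    (hdisj : ∀ i j, i ≠ j → Disjoint (S i) (S j))
    (hScard : ∀ i, c * (T.n : ℝ) ≤ ((S i).card : ℝ))
    (hsm : T.Smooth lam₀ (2 * t + 1) S)
    (hsub : ∀ A : Finset (Fin T.n), A ≠ Finset.univ →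
      ∃ B ⊆ A, T.IsTransitiveSet B ∧ (A.card : ℝ) ^ eps ≤ (B.card : ℝ)) :
    ∀ r, r ≤ t → ∃ (A : Fin (2 * t + 1) → Finset (Fin T.n)) (B : ℕ → Finset (Fin T.n)),
      (∀ j, A j ⊆ S j) ∧
      (∀ j, (1 - (r : ℝ) / (4 * t)) * ((S j).card : ℝ) ≤ ((A j).card : ℝ)) ∧
      (∀ r', r' < r → ∀ (h : 2 * r' + 1 < 2 * t + 1), B r' ⊆ S ⟨2 * r' + 1, h⟩) ∧
      (∀ r', r' < r → T.IsTransitiveSet (B r')) ∧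
      (∀ r', r' < r → ((3 / 4) * (c * (T.n : ℝ))) ^ eps ≤ ((B r').card : ℝ)) ∧
      (∀ r', r' < r → ∀ j : Fin (2 * t + 1), 2 * r' + 1 < (j : ℕ) → ∀ w ∈ A j,
        (((B r').filter fun u => T.adj w u).card : ℝ) ≤ 4 * t * lam₀ * ((B r').card : ℝ)) ∧
      (∀ r'' r', r'' < r' → r' < r → ∀ w ∈ B r',
        (((B r'').filter fun u => T.adj w u).card : ℝ) ≤ 4 * t * lam₀ * ((B r'').card : ℝ)) := by
  have ht' : (0 : ℝ) < t := by exact_mod_cast ht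
  have hnR : (0 : ℝ) < T.n := by exact_mod_cast hn
  intro r
  induction r with
  | zero =>
    intro _
    exact ⟨S, fun _ => ∅, fun j => Finset.Subset.refl _, fun j => by simp,
      fun r' hr' => by omega, fun r' hr' => by omega, fun r' hr' => by omega,
      fun r' hr' => by omega, fun r'' r' h1 h2 => by omega⟩
  | succ r IH =>
    intro hr1
    obtain ⟨A, B, hA1, hA2, hB1, hB2, hB3, hAB, hBB⟩ := IH (by omega)
    have hrt : (r : ℝ) / (4 * t) ≤ 1 / 4 := by
      rw [div_le_div_iff₀ (by positivity) (by norm_num)]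
      have : (r : ℝ) ≤ t := by exact_mod_cast le_trans (Nat.le_succ r) hr1
      nlinarith
    set j₀ : Fin (2 * t + 1) := ⟨2 * r + 1, by omega⟩ with hj₀
    have hAuniv : A j₀ ≠ Finset.univ := by
      intro hu
      have h0ne : (⟨0, by omega⟩ : Fin (2 * t + 1)) ≠ j₀ := by
        intro h; rw [Fin.ext_iff] at h; simp [hj₀] at h
      have hS0 : (S ⟨0, by omega⟩).Nonempty := by
        rw [← Finset.card_pos]
        have h5 := hScard ⟨0, by omega⟩
        have h6 : (0 : ℝ) < ((S ⟨0, by omega⟩).card : ℝ) := lt_of_lt_of_le (by positivity) h5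
        exact_mod_cast h6
      obtain ⟨v, hv⟩ := hS0
      have hvnot : v ∉ S j₀ := Finset.disjoint_left.mp (hdisj _ _ h0ne) hv
      exact hvnot (hA1 j₀ (hu ▸ Finset.mem_univ v))
    obtain ⟨Bn, hBnA, hBnT, hBnC⟩ := hsub (A j₀) hAuniv
    have hAj₀ : (3 / 4) * (c * (T.n : ℝ)) ≤ ((A j₀).card : ℝ) := by
      have h1 := hA2 j₀
      have h2 := hScard j₀
      have h3 : (3 / 4 : ℝ) ≤ 1 - (r : ℝ) / (4 * t) := by linarith
      have h4 : (0 : ℝ) ≤ ((S j₀).card : ℝ) := by positivity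
      nlinarith
    have hBnCard : ((3 / 4) * (c * (T.n : ℝ))) ^ eps ≤ ((Bn).card : ℝ) :=
      le_trans (Real.rpow_le_rpow (by positivity) hAj₀ heps0.le) hBnC
    set θ : ℝ := 4 * t * lam₀ * (Bn.card : ℝ) with hθ
    have hθ0 : 0 ≤ θ := by positivity
    set A' : Fin (2 * t + 1) → Finset (Fin T.n) := fun j =>
      if 2 * r + 1 < (j : ℕ) then
        (A j).filter fun w => ((Bn.filter fun u => T.adj w u).card : ℝ) ≤ θ
      else A j with hA'
    set B' : ℕ → Finset (Fin T.n) := fun r' => if r' = r then Bn else B r' with hB'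
    have hA'sub : ∀ j, A' j ⊆ A j := by
      intro j
      rw [hA']; dsimp only
      split
      · exact Finset.filter_subset _ _
      · exact Finset.Subset.refl _
    -- cardinality bound for pruned sets
    have hA'2 : ∀ j, (1 - ((r + 1 : ℕ) : ℝ) / (4 * t)) * ((S j).card : ℝ) ≤ ((A' j).card : ℝ) := by
      intro j
      have hSj0 : (0 : ℝ) ≤ ((S j).card : ℝ) := by positivity
      have hstep : ((r : ℝ) + 1) / (4 * t) = (r : ℝ) / (4 * t) + 1 / (4 * t) := by ring
      by_cases hj : 2 * r + 1 < (j : ℕ)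
      · have hAeq : A' j = (A j).filter fun w => ((Bn.filter fun u => T.adj w u).card : ℝ) ≤ θ := by
          rw [hA']; dsimp only; rw [if_pos hj]
        set bad := (A j).filter fun w => θ < ((Bn.filter fun u => T.adj w u).card : ℝ) with hbad
        have hpart : ((A j).filter fun w => ((Bn.filter fun u => T.adj w u).card : ℝ) ≤ θ).card
            + bad.card = (A j).card := by
          rw [hbad]
          have : (A j).filter (fun w => θ < ((Bn.filter fun u => T.adj w u).card : ℝ))
              = (A j).filter fun w => ¬ (((Bn.filter fun u => T.adj w u).card : ℝ) ≤ θ) := by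
            apply Finset.filter_congr
            intro w _
            simp [not_le]
          rw [this, Finset.card_filter_add_card_filter_not]
        -- bound on bad via counting
        have hjlt : j₀ < j := by
          rw [Fin.lt_def]; exact hj
        have hjne : j₀ ≠ j := ne_of_lt hjlt
        have hbadle : ((bad.card : ℝ)) ≤ ((S j).card : ℝ) / (4 * t) := by
          rw [hbad]
          apply countBad (A j) _ θ (((S j).card : ℝ) / (4 * t))
            (lam₀ * ((S j).card : ℝ) * (Bn.card : ℝ)) hθ0 (by clear hjne hjlt hpart hbad hAeq hj; positivity)
          · have hsum1 : ∑ w ∈ A j, (((Bn.filter fun u => T.adj w u).card : ℕ) : ℝ)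
                ≤ ∑ w ∈ S j, (((Bn.filter fun u => T.adj w u).card : ℕ) : ℝ) := by
              apply Finset.sum_le_sum_of_subset_of_nonneg (hA1 j)
              intro i _ _; clear hjne hjlt hpart hbad hAeq hj; positivity
            have hsum2 : ∑ w ∈ S j, ((Bn.filter fun u => T.adj w u).card : ℕ)
                = ∑ u ∈ Bn, (((S j).filter fun w => T.adj w u).card : ℕ) :=
              sumFilterComm (S j) Bn (fun w u => T.adj w u)
            have hsum3 : ∑ u ∈ Bn, ((((S j).filter fun w => T.adj w u).card : ℕ) : ℝ)
                ≤ ∑ _u ∈ Bn, lam₀ * ((S j).card : ℝ) := by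
              apply Finset.sum_le_sum
              intro u hu
              have huS : u ∈ S j₀ := hA1 j₀ (hBnA hu)
              have huNot : u ∉ S j := Finset.disjoint_left.mp (hdisj _ _ hjne) huS
              exact T.backOfDensitySingleLeft u (S j) huNot lam₀
                (((hsm j₀ j hjlt).1 u huS))
            calc ∑ w ∈ A j, (((Bn.filter fun u => T.adj w u).card : ℕ) : ℝ)
                ≤ ∑ w ∈ S j, (((Bn.filter fun u => T.adj w u).card : ℕ) : ℝ) := hsum1
              _ = ∑ u ∈ Bn, ((((S j).filter fun w => T.adj w u).card : ℕ) : ℝ) := by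
                  exact_mod_cast congrArg (Nat.cast (R := ℝ)) hsum2
              _ ≤ ∑ _u ∈ Bn, lam₀ * ((S j).card : ℝ) := hsum3
              _ = (Bn.card : ℝ) * (lam₀ * ((S j).card : ℝ)) := by
                  rw [Finset.sum_const, nsmul_eq_mul]
              _ = lam₀ * ((S j).card : ℝ) * (Bn.card : ℝ) := by ring
          · have heq : θ * (((S j).card : ℝ) / (4 * t))
                = lam₀ * ((S j).card : ℝ) * (Bn.card : ℝ) := by
              rw [hθ]; clear hjne hjlt hpart hbad hAeq hj; field_simp
            linarith [le_of_eq heq.symm]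
        have hpartR : ((A' j).card : ℝ) + (bad.card : ℝ) = ((A j).card : ℝ) := by
          rw [hAeq]
          exact_mod_cast congrArg (Nat.cast (R := ℝ)) hpart
        have h1 := hA2 j
        have hh : (1 - ((r + 1 : ℕ) : ℝ) / (4 * t)) * ((S j).card : ℝ)
            = (1 - (r : ℝ) / (4 * t)) * ((S j).card : ℝ) - ((S j).card : ℝ) / (4 * t) := by
          push_cast
          clear hpartR hbadle hjne hjlt hpart hbad hAeq hj
          field_simp
          ring
        linarith
      · have hAeq : A' j = A j := by rw [hA']; dsimp only; rw [if_neg hj]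
        rw [hAeq]
        have h1 := hA2 j
        have hh : (1 - ((r + 1 : ℕ) : ℝ) / (4 * t)) * ((S j).card : ℝ)
            = (1 - (r : ℝ) / (4 * t)) * ((S j).card : ℝ) - ((S j).card : ℝ) / (4 * t) := by
          push_cast
          field_simp
          ring
        have hpos : (0:ℝ) ≤ ((S j).card : ℝ) / (4 * t) := by positivity
        linarith
    -- assemble
    refine ⟨A', B', fun j => (hA'sub j).trans (hA1 j), hA'2, ?_, ?_, ?_, ?_, ?_⟩
    · intro r' hr' h
      rw [hB']; dsimp only
      by_cases hre : r' = r
      · subst hre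
        rw [if_pos rfl]
        exact fun x hx => hA1 j₀ (hBnA hx)
      · rw [if_neg hre]
        exact hB1 r' (by omega) h
    · intro r' hr'
      rw [hB']; dsimp only
      by_cases hre : r' = r
      · subst hre; rw [if_pos rfl]; exact hBnT
      · rw [if_neg hre]; exact hB2 r' (by omega)
    · intro r' hr'
      rw [hB']; dsimp only
      by_cases hre : r' = r
      · subst hre; rw [if_pos rfl]; exact hBnCard
      · rw [if_neg hre]; exact hB3 r' (by omega)
    · intro r' hr' j hj w hw
      rw [hB']; dsimp only
      by_cases hre : r' = r
      · subst hre
        rw [if_pos rfl]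
        have hAeq : A' j = (A j).filter fun w => ((Bn.filter fun u => T.adj w u).card : ℝ) ≤ θ := by
          rw [hA']; dsimp only; rw [if_pos hj]
        rw [hAeq] at hw
        exact (Finset.mem_filter.mp hw).2
      · rw [if_neg hre]
        exact hAB r' (by omega) j hj w (hA'sub j hw)
    · intro r'' r' hlt hr' w hw
      rw [hB']; dsimp only
      have hre'' : r'' ≠ r := by omega
      rw [if_neg hre'']
      by_cases hre : r' = r
      · subst hre
        rw [hB'] at hw; dsimp only at hw; rw [if_pos rfl] at hw
        exact hAB r'' (by omega) j₀ (by simp [hj₀]; omega) w (hBnA hw)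
      · rw [hB'] at hw; dsimp only at hw; rw [if_neg hre] at hw
        exact hBB r'' r' hlt (by omega) w hw

end Phase1

section Phase2

open Finset

set_option maxHeartbeats 16000000 in
lemma phase2 (T : Tournament) (t : ℕ) (ht : 1 ≤ t) (c lam₀ : ℝ) (hc : 0 < c)
    (hl0 : 0 ≤ lam₀) (hn : 0 < T.n)
    (S : Fin (2 * t + 1) → Finset (Fin T.n))
    (hdisj : ∀ i j, i ≠ j → Disjoint (S i) (S j))
    (hsm : T.Smooth lam₀ (2 * t + 1) S)
    (A : Fin (2 * t + 1) → Finset (Fin T.n)) (B : ℕ → Finset (Fin T.n))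
    (hA1 : ∀ j, A j ⊆ S j)
    (hA2' : ∀ j, (3 / 4 : ℝ) * ((S j).card : ℝ) ≤ ((A j).card : ℝ))
    (hB1 : ∀ r', r' < t → ∀ (h : 2 * r' + 1 < 2 * t + 1), B r' ⊆ S ⟨2 * r' + 1, h⟩)
    (hAB : ∀ r', r' < t → ∀ j : Fin (2 * t + 1), 2 * r' + 1 < (j : ℕ) → ∀ w ∈ A j,
        (((B r').filter fun u => T.adj w u).card : ℝ) ≤ 4 * t * lam₀ * ((B r').card : ℝ))
    (hBB : ∀ r'' r', r'' < r' → r' < t → ∀ w ∈ B r',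
        (((B r'').filter fun u => T.adj w u).card : ℝ) ≤ 4 * t * lam₀ * ((B r'').card : ℝ)) :
    ∃ X' : Fin (2 * t + 1) → Finset (Fin T.n),
      (∀ i, X' i ⊆ S i) ∧
      (∀ i : Fin (2 * t + 1), (i : ℕ) % 2 = 1 → X' i ⊆ B ((i : ℕ) / 2)) ∧
      (∀ i : Fin (2 * t + 1), (i : ℕ) % 2 = 0 →
        (1 / 2 : ℝ) * ((S i).card : ℝ) ≤ ((X' i).card : ℝ)) ∧
      (∀ i : Fin (2 * t + 1), (i : ℕ) % 2 = 1 →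
        (3 / 4 : ℝ) * ((B ((i : ℕ) / 2)).card : ℝ) ≤ ((X' i).card : ℝ)) ∧
      (∀ i j : Fin (2 * t + 1), i < j → ∀ v ∈ X' i,
        (((X' j).filter fun w => T.adj w v).card : ℝ)
          ≤ 64 * (t : ℝ) ^ 2 * ((t : ℝ) + 1) * lam₀ * ((X' j).card : ℝ)) ∧
      (∀ i j : Fin (2 * t + 1), i < j → ∀ w ∈ X' j,
        (((X' i).filter fun u => T.adj w u).card : ℝ)
          ≤ 64 * (t : ℝ) ^ 2 * ((t : ℝ) + 1) * lam₀ * ((X' i).card : ℝ)) := by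
  classical
  have htR : (1 : ℝ) ≤ (t : ℝ) := by exact_mod_cast ht
  have htR0 : (0 : ℝ) < (t : ℝ) := by linarith
  have htne : (t : ℝ) ≠ 0 := ne_of_gt htR0
  set lam : ℝ := 64 * (t : ℝ) ^ 2 * ((t : ℝ) + 1) * lam₀ with hlamdef
  set lam1 : ℝ := 4 * t * lam₀ with hlam1
  set lam2 : ℝ := 16 * (t : ℝ) ^ 2 * lam₀ with hlam2
  have htsq : (1 : ℝ) ≤ (t : ℝ) ^ 2 := by nlinarith
  have htcb : (0 : ℝ) ≤ (t : ℝ) ^ 2 * (t : ℝ) := by positivity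
  have hlamA : 2 * lam₀ ≤ lam := by
    rw [hlamdef]
    have hfac : (2 : ℝ) ≤ 64 * (t : ℝ) ^ 2 * ((t : ℝ) + 1) := by nlinarith
    have := mul_le_mul_of_nonneg_right hfac hl0
    linarith
  have hlamB : (4 / 3) * lam2 ≤ lam := by
    rw [hlamdef, hlam2]
    have hfac : (4 / 3 : ℝ) * (16 * (t : ℝ) ^ 2) ≤ 64 * (t : ℝ) ^ 2 * ((t : ℝ) + 1) := by
      nlinarith
    have := mul_le_mul_of_nonneg_right hfac hl0
    linarith
  have hlamC : (4 / 3) * lam1 ≤ lam := by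
    rw [hlamdef, hlam1]
    have hfac : (4 / 3 : ℝ) * (4 * (t : ℝ)) ≤ 64 * (t : ℝ) ^ 2 * ((t : ℝ) + 1) := by
      nlinarith
    have := mul_le_mul_of_nonneg_right hfac hl0
    linarith
  have hlam2nn : 0 ≤ lam2 := by rw [hlam2]; positivity
  have hlam1nn : 0 ≤ lam1 := by rw [hlam1]; positivity
  set X : Fin (2 * t + 1) → Finset (Fin T.n) := fun i =>
    if (i : ℕ) % 2 = 1 then B ((i : ℕ) / 2) else A i with hX
  set X' : Fin (2 * t + 1) → Finset (Fin T.n) := fun i =>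
    (X i).filter fun v => ∀ r', r' < t → (i : ℕ) < 2 * r' + 1 →
      (((B r').filter fun w => T.adj w v).card : ℝ) ≤ lam2 * ((B r').card : ℝ) with hX'
  have hXodd : ∀ i : Fin (2 * t + 1), (i : ℕ) % 2 = 1 → X i = B ((i : ℕ) / 2) := by
    intro i h; rw [hX]; dsimp only; rw [if_pos h]
  have hXeven : ∀ i : Fin (2 * t + 1), (i : ℕ) % 2 = 0 → X i = A i := by
    intro i h; rw [hX]; dsimp only; rw [if_neg (by omega)]
  have hXsub : ∀ i, X i ⊆ S i := by
    intro i
    have hibd := i.isLt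
    rcases Nat.even_or_odd (i : ℕ) with he | ho
    · rw [hXeven i (Nat.even_iff.mp he)]; exact hA1 i
    · have h1 : (i : ℕ) % 2 = 1 := Nat.odd_iff.mp ho
      rw [hXodd i h1]
      have hrt : (i : ℕ) / 2 < t := by omega
      have h2 := hB1 ((i : ℕ) / 2) hrt (by omega)
      have h3 : (⟨2 * ((i : ℕ) / 2) + 1, by omega⟩ : Fin (2 * t + 1)) = i :=
        Fin.ext (show 2 * ((i : ℕ) / 2) + 1 = (i : ℕ) by omega)
      rwa [h3] at h2
  have hX'subX : ∀ i, X' i ⊆ X i := by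
    intro i; rw [hX']; exact Finset.filter_subset _ _
  have hX'sub : ∀ i, X' i ⊆ S i := fun i => (hX'subX i).trans (hXsub i)
  -- removal bound
  have hXdiff : ∀ i, ((X i).card : ℝ) ≤ ((X' i).card : ℝ) + ∑ r' ∈ Finset.range t,
      (((X i).filter fun v => (i : ℕ) < 2 * r' + 1 ∧
        lam2 * ((B r').card : ℝ) < (((B r').filter fun w => T.adj w v).card : ℝ)).card : ℝ) := by
    intro i
    set BU := (Finset.range t).biUnion (fun r' => (X i).filter fun v => (i : ℕ) < 2 * r' + 1 ∧
        lam2 * ((B r').card : ℝ) < (((B r').filter fun w => T.adj w v).card : ℝ)) with hBU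
    have hsubset : X i ⊆ X' i ∪ BU := by
      intro v hv
      by_cases hgood : ∀ r', r' < t → (i : ℕ) < 2 * r' + 1 →
          (((B r').filter fun w => T.adj w v).card : ℝ) ≤ lam2 * ((B r').card : ℝ)
      · apply Finset.mem_union_left
        rw [hX']
        exact Finset.mem_filter.mpr ⟨hv, hgood⟩
      · push_neg at hgood
        obtain ⟨r', h1, h2, h3⟩ := hgood
        apply Finset.mem_union_right
        rw [hBU]
        exact Finset.mem_biUnion.mpr ⟨r', Finset.mem_range.mpr h1,
          Finset.mem_filter.mpr ⟨hv, h2, h3⟩⟩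
    have h4 : (X i).card ≤ (X' i).card + ∑ r' ∈ Finset.range t,
        ((X i).filter fun v => (i : ℕ) < 2 * r' + 1 ∧
          lam2 * ((B r').card : ℝ) < (((B r').filter fun w => T.adj w v).card : ℝ)).card := by
      calc (X i).card ≤ (X' i ∪ BU).card := Finset.card_le_card hsubset
        _ ≤ (X' i).card + BU.card := Finset.card_union_le _ _
        _ ≤ _ := by
            have := Finset.card_biUnion_le (s := Finset.range t)
              (t := fun r' => (X i).filter fun v => (i : ℕ) < 2 * r' + 1 ∧
                lam2 * ((B r').card : ℝ) < (((B r').filter fun w => T.adj w v).card : ℝ))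
            rw [hBU]
            omega
    exact_mod_cast h4
  -- bad set bounds
  have hbad : ∀ i : Fin (2 * t + 1), ∀ r', r' < t →
      (((X i).filter fun v => (i : ℕ) < 2 * r' + 1 ∧
        lam2 * ((B r').card : ℝ) < (((B r').filter fun w => T.adj w v).card : ℝ)).card : ℝ)
      ≤ (if (i : ℕ) % 2 = 1 then ((X i).card : ℝ) / (4 * t)
          else ((S i).card : ℝ) / (16 * (t : ℝ) ^ 2)) := by
    intro i r' hr'
    have hposgoal : (0 : ℝ) ≤ (if (i : ℕ) % 2 = 1 then ((X i).card : ℝ) / (4 * t)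
        else ((S i).card : ℝ) / (16 * (t : ℝ) ^ 2)) := by
      split <;> positivity
    by_cases hcond : (i : ℕ) < 2 * r' + 1
    · have hsub2 : ((X i).filter fun v => (i : ℕ) < 2 * r' + 1 ∧
          lam2 * ((B r').card : ℝ) < (((B r').filter fun w => T.adj w v).card : ℝ)) ⊆
          ((X i).filter fun v =>
            lam2 * ((B r').card : ℝ) < ((((B r').filter fun w => T.adj w v).card : ℕ) : ℝ)) := by
        intro v hv
        rw [Finset.mem_filter] at hv ⊢
        exact ⟨hv.1, hv.2.2⟩
      have hsub2card : ((((X i).filter fun v => (i : ℕ) < 2 * r' + 1 ∧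
          lam2 * ((B r').card : ℝ) < (((B r').filter fun w => T.adj w v).card : ℝ)).card : ℕ) : ℝ)
          ≤ ((((X i).filter fun v =>
            lam2 * ((B r').card : ℝ) < ((((B r').filter fun w => T.adj w v).card : ℕ) : ℝ)).card : ℕ) : ℝ) := by
        exact_mod_cast Finset.card_le_card hsub2
      refine le_trans hsub2card ?_
      set j' : Fin (2 * t + 1) := ⟨2 * r' + 1, by omega⟩ with hj'
      have hij' : i < j' := by rw [Fin.lt_def]; exact hcond
      have hij'ne : i ≠ j' := ne_of_lt hij'
      rcases Nat.even_or_odd (i : ℕ) with he | ho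
      · -- even case
        have h0 : (i : ℕ) % 2 = 0 := Nat.even_iff.mp he
        rw [if_neg (by omega)]
        refine countBad (X i) (fun v => ((B r').filter fun w => T.adj w v).card)
          (lam2 * ((B r').card : ℝ)) (((S i).card : ℝ) / (16 * (t : ℝ) ^ 2))
          (lam₀ * ((S i).card : ℝ) * ((B r').card : ℝ))
          (by positivity) (by positivity) ?_ ?_
        · have hs1 : ∑ v ∈ X i, ((((B r').filter fun w => T.adj w v).card : ℕ) : ℝ)
              ≤ ∑ v ∈ S i, ((((B r').filter fun w => T.adj w v).card : ℕ) : ℝ) :=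
            Finset.sum_le_sum_of_subset_of_nonneg (hXsub i) (fun _ _ _ => by positivity)
          have hs2 : ∑ v ∈ S i, ((B r').filter fun w => T.adj w v).card
              = ∑ w ∈ B r', ((S i).filter fun v => T.adj w v).card :=
            sumFilterComm (S i) (B r') (fun v w => T.adj w v)
          have hs3 : ∑ w ∈ B r', ((((S i).filter fun v => T.adj w v).card : ℕ) : ℝ)
              ≤ ∑ _w ∈ B r', lam₀ * ((S i).card : ℝ) := by
            apply Finset.sum_le_sum
            intro w hw
            have hwS : w ∈ S j' := hB1 r' hr' (by omega) hw
            have hwnot : w ∉ S i := Finset.disjoint_left.mp (hdisj j' i (Ne.symm hij'ne)) hwS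
            exact T.backOfDensitySingleRight w (S i) hwnot lam₀ ((hsm i j' hij').2 w hwS)
          calc ∑ v ∈ X i, ((((B r').filter fun w => T.adj w v).card : ℕ) : ℝ)
              ≤ ∑ v ∈ S i, ((((B r').filter fun w => T.adj w v).card : ℕ) : ℝ) := hs1
            _ = ∑ w ∈ B r', ((((S i).filter fun v => T.adj w v).card : ℕ) : ℝ) := by
                exact_mod_cast congrArg (Nat.cast (R := ℝ)) hs2
            _ ≤ ∑ _w ∈ B r', lam₀ * ((S i).card : ℝ) := hs3
            _ = lam₀ * ((S i).card : ℝ) * ((B r').card : ℝ) := by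
                rw [Finset.sum_const, nsmul_eq_mul]; ring
        · have heqq : lam2 * ((B r').card : ℝ) * (((S i).card : ℝ) / (16 * (t : ℝ) ^ 2))
              = lam₀ * ((S i).card : ℝ) * ((B r').card : ℝ) := by
            rw [hlam2]; field_simp
          linarith [le_of_eq heqq.symm]
      · -- odd case
        have h1 : (i : ℕ) % 2 = 1 := Nat.odd_iff.mp ho
        rw [if_pos h1]
        set r'' := (i : ℕ) / 2 with hr''
        have hie : (i : ℕ) = 2 * r'' + 1 := by omega
        have hrr : r'' < r' := by omega
        have hXi : X i = B r'' := hXodd i h1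
        refine countBad (X i) (fun v => ((B r').filter fun w => T.adj w v).card)
          (lam2 * ((B r').card : ℝ)) (((X i).card : ℝ) / (4 * t))
          (lam1 * ((B r'').card : ℝ) * ((B r').card : ℝ))
          (by clear hie; positivity) (by clear hie; positivity) ?_ ?_
        · have hs2 : ∑ v ∈ X i, ((B r').filter fun w => T.adj w v).card
              = ∑ w ∈ B r', ((X i).filter fun v => T.adj w v).card :=
            sumFilterComm (X i) (B r') (fun v w => T.adj w v)
          have hs3 : ∑ w ∈ B r', ((((X i).filter fun v => T.adj w v).card : ℕ) : ℝ)
              ≤ ∑ _w ∈ B r', lam1 * ((B r'').card : ℝ) := by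
            apply Finset.sum_le_sum
            intro w hw
            rw [hXi]
            exact hBB r'' r' hrr hr' w hw
          calc ∑ v ∈ X i, ((((B r').filter fun w => T.adj w v).card : ℕ) : ℝ)
              = ∑ w ∈ B r', ((((X i).filter fun v => T.adj w v).card : ℕ) : ℝ) := by
                exact_mod_cast congrArg (Nat.cast (R := ℝ)) hs2
            _ ≤ ∑ _w ∈ B r', lam1 * ((B r'').card : ℝ) := hs3
            _ = lam1 * ((B r'').card : ℝ) * ((B r').card : ℝ) := by
                rw [Finset.sum_const, nsmul_eq_mul]; ring
        · have heqq : lam2 * ((B r').card : ℝ) * (((X i).card : ℝ) / (4 * t))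
              = lam1 * ((X i).card : ℝ) * ((B r').card : ℝ) := by
            rw [hlam2, hlam1]; clear hie; field_simp; ring
          rw [hXi] at heqq ⊢
          linarith [le_of_eq heqq.symm]
    · have hempt : ((X i).filter fun v => (i : ℕ) < 2 * r' + 1 ∧
          lam2 * ((B r').card : ℝ) < (((B r').filter fun w => T.adj w v).card : ℝ)) = ∅ := by
        apply Finset.filter_false_of_mem
        intro v _ h
        exact hcond h.1
      rw [hempt]
      simpa using hposgoal
  -- size of X' sets
  have hX'odd : ∀ i : Fin (2 * t + 1), (i : ℕ) % 2 = 1 →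
      (3 / 4 : ℝ) * ((X i).card : ℝ) ≤ ((X' i).card : ℝ) := by
    intro i h1
    have h2 := hXdiff i
    have h3 : ∑ r' ∈ Finset.range t,
        (((X i).filter fun v => (i : ℕ) < 2 * r' + 1 ∧
          lam2 * ((B r').card : ℝ) < (((B r').filter fun w => T.adj w v).card : ℝ)).card : ℝ)
        ≤ ∑ _r' ∈ Finset.range t, ((X i).card : ℝ) / (4 * t) := by
      apply Finset.sum_le_sum
      intro r' hr'
      have := hbad i r' (Finset.mem_range.mp hr')
      rwa [if_pos h1] at this
    have h4 : ∑ _r' ∈ Finset.range t, ((X i).card : ℝ) / (4 * t)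
        = ((X i).card : ℝ) / 4 := by
      rw [Finset.sum_const, Finset.card_range, nsmul_eq_mul]
      field_simp
    linarith
  have hX'even : ∀ i : Fin (2 * t + 1), (i : ℕ) % 2 = 0 →
      (1 / 2 : ℝ) * ((S i).card : ℝ) ≤ ((X' i).card : ℝ) := by
    intro i h1
    have h2 := hXdiff i
    have h3 : ∑ r' ∈ Finset.range t,
        (((X i).filter fun v => (i : ℕ) < 2 * r' + 1 ∧
          lam2 * ((B r').card : ℝ) < (((B r').filter fun w => T.adj w v).card : ℝ)).card : ℝ)
        ≤ ∑ _r' ∈ Finset.range t, ((S i).card : ℝ) / (16 * (t : ℝ) ^ 2) := by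
      apply Finset.sum_le_sum
      intro r' hr'
      have := hbad i r' (Finset.mem_range.mp hr')
      rwa [if_neg (by omega)] at this
    have h4 : ∑ _r' ∈ Finset.range t, ((S i).card : ℝ) / (16 * (t : ℝ) ^ 2)
        = ((S i).card : ℝ) / (16 * t) := by
      rw [Finset.sum_const, Finset.card_range, nsmul_eq_mul]
      field_simp
    have h5 : ((S i).card : ℝ) / (16 * t) ≤ ((S i).card : ℝ) / 16 := by
      apply div_le_div_of_nonneg_left (by positivity) (by norm_num)
      nlinarith
    have h6' : (3 / 4 : ℝ) * ((S i).card : ℝ) ≤ ((X i).card : ℝ) := by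
      rw [hXeven i h1]; exact hA2' i
    have hSnn : (0 : ℝ) ≤ ((S i).card : ℝ) := by positivity
    linarith
  -- key backward bounds
  have key1 : ∀ i j : Fin (2 * t + 1), i < j → ∀ v ∈ X' i,
      (((X' j).filter fun w => T.adj w v).card : ℝ) ≤ lam * ((X' j).card : ℝ) := by
    intro i j hij v hv
    have hjbd := j.isLt
    have hvS : v ∈ S i := hX'sub i hv
    rcases Nat.even_or_odd (j : ℕ) with he | ho
    · have h0 : (j : ℕ) % 2 = 0 := Nat.even_iff.mp he
      have hb1 : (((X' j).filter fun w => T.adj w v).card : ℝ)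
          ≤ (((S j).filter fun w => T.adj w v).card : ℝ) := by
        exact_mod_cast Finset.card_le_card (Finset.monotone_filter_left _ (hX'sub j))
      have hvnot : v ∉ S j := Finset.disjoint_left.mp (hdisj i j (ne_of_lt hij)) hvS
      have hb2 := T.backOfDensitySingleLeft v (S j) hvnot lam₀ ((hsm i j hij).1 v hvS)
      have hb3 := hX'even j h0
      nlinarith [hb1, hb2,
        mul_le_mul_of_nonneg_left hb3 (by linarith : (0:ℝ) ≤ 2 * lam₀),
        mul_le_mul_of_nonneg_right hlamA (by positivity : (0:ℝ) ≤ ((X' j).card : ℝ))]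
    · have h1 : (j : ℕ) % 2 = 1 := Nat.odd_iff.mp ho
      set r' := (j : ℕ) / 2 with hr'
      have hrt : r' < t := by omega
      have hje : (j : ℕ) = 2 * r' + 1 := by omega
      have hicond : (i : ℕ) < 2 * r' + 1 := by
        have h9 := hij; rw [Fin.lt_def] at h9; omega
      rw [hX'] at hv
      have hv2 := (Finset.mem_filter.mp hv).2 r' hrt hicond
      have hb1 : (((X' j).filter fun w => T.adj w v).card : ℝ)
          ≤ (((B r').filter fun w => T.adj w v).card : ℝ) := by
        have hsubj : X' j ⊆ B r' := by
          rw [← hXodd j h1]; exact hX'subX j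
        exact_mod_cast Finset.card_le_card (Finset.monotone_filter_left _ hsubj)
      have hb3 := hX'odd j h1
      rw [hXodd j h1] at hb3
      nlinarith [hv2, hb1,
        mul_le_mul_of_nonneg_left hb3 (by linarith : (0:ℝ) ≤ (4/3) * lam2),
        mul_le_mul_of_nonneg_right hlamB (by clear hje; positivity : (0:ℝ) ≤ ((X' j).card : ℝ))]
  have key2 : ∀ i j : Fin (2 * t + 1), i < j → ∀ w ∈ X' j,
      (((X' i).filter fun u => T.adj w u).card : ℝ) ≤ lam * ((X' i).card : ℝ) := by
    intro i j hij w hw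
    have hjbd := j.isLt
    have hibd := i.isLt
    have hwS : w ∈ S j := hX'sub j hw
    rcases Nat.even_or_odd (i : ℕ) with he | ho
    · have h0 : (i : ℕ) % 2 = 0 := Nat.even_iff.mp he
      have hb1 : (((X' i).filter fun u => T.adj w u).card : ℝ)
          ≤ (((S i).filter fun u => T.adj w u).card : ℝ) := by
        exact_mod_cast Finset.card_le_card (Finset.monotone_filter_left _ (hX'sub i))
      have hwnot : w ∉ S i := Finset.disjoint_left.mp (hdisj j i (ne_of_lt hij).symm) hwS
      have hb2 := T.backOfDensitySingleRight w (S i) hwnot lam₀ ((hsm i j hij).2 w hwS)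
      have hb3 := hX'even i h0
      nlinarith [hb1, hb2,
        mul_le_mul_of_nonneg_left hb3 (by linarith : (0:ℝ) ≤ 2 * lam₀),
        mul_le_mul_of_nonneg_right hlamA (by positivity : (0:ℝ) ≤ ((X' i).card : ℝ))]
    · have h1 : (i : ℕ) % 2 = 1 := Nat.odd_iff.mp ho
      set r'' := (i : ℕ) / 2 with hr''
      have hijn : (i : ℕ) < (j : ℕ) := by rw [Fin.lt_def] at hij; exact hij
      have hrt'' : r'' < t := by omega
      have hie : (i : ℕ) = 2 * r'' + 1 := by omega
      have hwB : (((B r'').filter fun u => T.adj w u).card : ℝ)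
          ≤ lam1 * ((B r'').card : ℝ) := by
        have hwX : w ∈ X j := hX'subX j hw
        rcases Nat.even_or_odd (j : ℕ) with hje | hjo
        · have hj0 : (j : ℕ) % 2 = 0 := Nat.even_iff.mp hje
          rw [hXeven j hj0] at hwX
          have := hAB r'' hrt'' j (by omega) w hwX
          rw [hlam1]
          exact this
        · have hj1 : (j : ℕ) % 2 = 1 := Nat.odd_iff.mp hjo
          rw [hXodd j hj1] at hwX
          have h9 : r'' < (j : ℕ) / 2 := by omega
          have := hBB r'' ((j : ℕ) / 2) h9 (by omega) w hwX
          rw [hlam1]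
          exact this
      have hb1 : (((X' i).filter fun u => T.adj w u).card : ℝ)
          ≤ (((B r'').filter fun u => T.adj w u).card : ℝ) := by
        have hsubi : X' i ⊆ B r'' := by
          rw [← hXodd i h1]; exact hX'subX i
        exact_mod_cast Finset.card_le_card (Finset.monotone_filter_left _ hsubi)
      have hb3 := hX'odd i h1
      rw [hXodd i h1] at hb3
      nlinarith [hwB, hb1,
        mul_le_mul_of_nonneg_left hb3 (by linarith : (0:ℝ) ≤ (4/3) * lam1),
        mul_le_mul_of_nonneg_right hlamC (by clear hie; positivity : (0:ℝ) ≤ ((X' i).card : ℝ))]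
  refine ⟨X', hX'sub, ?_, hX'even, ?_, key1, key2⟩
  · intro i h1
    rw [← hXodd i h1]
    exact hX'subX i
  · intro i h1
    have := hX'odd i h1
    rwa [hXodd i h1] at this

end Phase2


set_option maxHeartbeats 2000000 in
/-- Let t ≥ 1 and let T contain a smooth (c,λ₀)-l-sequence of length 2t+1.
If every proper induced subtournament T|S satisfies tr(T|S) ≥ |S|^ε, where
0 < ε ≤ log 2 / log(2/c), then T contains a smooth (1/4, c/2, λ, ε)-m-sequence of length
2t+1, where λ = 64·t²·(t+1)·λ₀. -/
theorem stmt9 (T : Tournament) (t : ℕ) (ht : 1 ≤ t) (c lam₀ eps : ℝ) (hc : 0 < c)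
    (S : Fin (2 * t + 1) → Finset (Fin T.n))
    (hl : T.IsLSeq c lam₀ (2 * t + 1) S) (hsm : T.Smooth lam₀ (2 * t + 1) S)
    (heps₁ : 0 < eps) (heps₂ : eps ≤ Real.log 2 / Real.log (2 / c))
    (hsub : ∀ A : Finset (Fin T.n), A ≠ Finset.univ →
      ∃ B ⊆ A, T.IsTransitiveSet B ∧ (A.card : ℝ) ^ eps ≤ (B.card : ℝ)) :
    ∃ S' : Fin (2 * t + 1) → Finset (Fin T.n),
      T.IsMSeq (1 / 4) (c / 2) (64 * (t : ℝ) ^ 2 * ((t : ℝ) + 1) * lam₀) eps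
        (2 * t + 1) S' ∧
      T.Smooth (64 * (t : ℝ) ^ 2 * ((t : ℝ) + 1) * lam₀) (2 * t + 1) S' := by
  classical
  obtain ⟨⟨hne, hdisj, hdens⟩, hcard⟩ := hl
  obtain ⟨v0, hv0⟩ := hne ⟨0, by omega⟩
  have hn : 0 < T.n := v0.pos
  have hnR : (0 : ℝ) < (T.n : ℝ) := by exact_mod_cast hn
  have htR : (1 : ℝ) ≤ (t : ℝ) := by exact_mod_cast ht
  have htR0 : (0 : ℝ) < (t : ℝ) := by linarith
  have htne : (t : ℝ) ≠ 0 := ne_of_gt htR0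
  -- lam₀ is nonnegative
  have hl0 : 0 ≤ lam₀ := by
    have h01 : (⟨0, by omega⟩ : Fin (2 * t + 1)) < ⟨1, by omega⟩ := by
      simp [Fin.lt_def]
    have hd := hdens ⟨0, by omega⟩ ⟨1, by omega⟩ h01
    have hub := T.densityLeOne (S ⟨0, by omega⟩) (S ⟨1, by omega⟩)
    linarith
  -- c is at most 1/3
  have hsumcard : ∑ i : Fin (2 * t + 1), ((S i).card : ℝ) ≤ (T.n : ℝ) := by
    have h1 : (Finset.univ.biUnion S).card = ∑ i : Fin (2 * t + 1), (S i).card :=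
      Finset.card_biUnion (fun i _ j _ hij => hdisj i j hij)
    have h2 : (Finset.univ.biUnion S).card ≤ T.n := by
      calc (Finset.univ.biUnion S).card ≤ (Finset.univ : Finset (Fin T.n)).card :=
            Finset.card_le_card (Finset.subset_univ _)
        _ = T.n := by simp
    have h3 : ∑ i : Fin (2 * t + 1), (S i).card ≤ T.n := h1 ▸ h2
    exact_mod_cast h3
  have hc13 : c ≤ 1 / 3 := by
    have h1 : ((2 * t + 1 : ℕ) : ℝ) * (c * (T.n : ℝ)) ≤ ∑ i : Fin (2 * t + 1), ((S i).card : ℝ) := by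
      have h0 := Finset.sum_le_sum (s := (Finset.univ : Finset (Fin (2 * t + 1))))
        (fun i _ => hcard i)
      calc ((2 * t + 1 : ℕ) : ℝ) * (c * (T.n : ℝ))
          = ∑ _i : Fin (2 * t + 1), c * (T.n : ℝ) := by
            rw [Finset.sum_const, Finset.card_univ, Fintype.card_fin, nsmul_eq_mul]
        _ ≤ _ := h0
    have h3 : (3 : ℝ) ≤ ((2 * t + 1 : ℕ) : ℝ) := by
      push_cast; linarith
    by_contra hgt
    push_neg at hgt
    have h4 : (0 : ℝ) < c * (T.n : ℝ) := mul_pos hc hnR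
    have h5 : (3 : ℝ) * (c * (T.n : ℝ)) ≤ ((2 * t + 1 : ℕ) : ℝ) * (c * (T.n : ℝ)) :=
      mul_le_mul_of_nonneg_right h3 h4.le
    nlinarith [mul_pos (by linarith : (0:ℝ) < c - 1/3) hnR]
  -- rpow facts
  have hlog2 : (0 : ℝ) < Real.log 2 := Real.log_pos (by norm_num)
  have hc2 : (2 : ℝ) ≤ 2 / c := by
    rw [le_div_iff₀ hc]; nlinarith
  have hlogc : Real.log 2 ≤ Real.log (2 / c) := Real.log_le_log (by norm_num) hc2
  have heps1' : eps ≤ 1 := by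
    refine heps₂.trans ?_
    rw [div_le_one (by linarith)]
    exact hlogc
  have hepslog : eps * Real.log (2 / c) ≤ Real.log 2 :=
    (le_div_iff₀ (by linarith)).mp heps₂
  have h2c : (2 / c) ^ eps ≤ 2 := by
    rw [Real.rpow_def_of_pos (by positivity)]
    calc Real.exp (Real.log (2 / c) * eps) ≤ Real.exp (Real.log 2) :=
          Real.exp_le_exp.mpr (by nlinarith)
      _ = 2 := Real.exp_log (by norm_num)
  have h2e : (1 : ℝ) ≤ (2 : ℝ) ^ eps := by
    rw [Real.rpow_def_of_pos (by norm_num)]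
    calc (1 : ℝ) = Real.exp 0 := (Real.exp_zero).symm
      _ ≤ Real.exp (Real.log 2 * eps) := Real.exp_le_exp.mpr (by nlinarith)
  have hceps : (1 / 2 : ℝ) ≤ c ^ eps := by
    have hmule : c * (2 / c) = 2 := by field_simp
    have hmul : c ^ eps * (2 / c) ^ eps = (2 : ℝ) ^ eps := by
      rw [← Real.mul_rpow hc.le (by positivity), hmule]
    have hA : (0 : ℝ) < c ^ eps := Real.rpow_pos_of_pos hc eps
    have hB : (0 : ℝ) < (2 / c) ^ eps := Real.rpow_pos_of_pos (by positivity) eps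
    nlinarith
  have hnpos : (0 : ℝ) < (T.n : ℝ) ^ eps := Real.rpow_pos_of_pos hnR eps
  have hbig : (1 / 4 : ℝ) * (T.n : ℝ) ^ eps ≤ (3 / 4) * ((3 / 4) * (c * (T.n : ℝ))) ^ eps := by
    have h34 : (3 / 4 : ℝ) ≤ (3 / 4 : ℝ) ^ eps := by
      calc (3 / 4 : ℝ) = (3 / 4 : ℝ) ^ (1 : ℝ) := (Real.rpow_one _).symm
        _ ≤ (3 / 4 : ℝ) ^ eps :=
          Real.rpow_le_rpow_of_exponent_ge (by norm_num) (by norm_num) heps1'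
    have hsplit : ((3 / 4) * (c * (T.n : ℝ))) ^ eps
        = (3 / 4 : ℝ) ^ eps * c ^ eps * (T.n : ℝ) ^ eps := by
      rw [show (3 / 4 : ℝ) * (c * (T.n : ℝ)) = ((3 / 4) * c) * (T.n : ℝ) by ring,
        Real.mul_rpow (by positivity) (by positivity),
        Real.mul_rpow (by norm_num) hc.le]
    have hstep : (3 / 4 : ℝ) * (1 / 2) * ((T.n : ℝ) ^ eps)
        ≤ (3 / 4 : ℝ) ^ eps * c ^ eps * (T.n : ℝ) ^ eps := by
      apply mul_le_mul_of_nonneg_right _ hnpos.le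
      exact mul_le_mul h34 hceps (by norm_num) (by positivity)
    rw [hsplit]
    linarith
  -- run phase 1
  obtain ⟨A, B, hA1, hA2, hB1, hB2, hB3, hAB, hBB⟩ :=
    phase1 T t ht c lam₀ eps hc hl0 heps₁ hn S hdisj hcard hsm hsub t (le_refl t)
  have hA2' : ∀ j, (3 / 4 : ℝ) * ((S j).card : ℝ) ≤ ((A j).card : ℝ) := by
    intro j
    have hq : (t : ℝ) / (4 * t) = 1 / 4 := by
      rw [div_eq_div_iff (by positivity) (by norm_num)]
      ring
    have h9 := hA2 j
    rw [hq] at h9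
    linarith
  -- run phase 2
  obtain ⟨X', hX'sub, hX'B, hX'even, hX'odd, key1, key2⟩ :=
    phase2 T t ht c lam₀ hc hl0 hn S hdisj hsm A B hA1 hA2' hB1 hAB hBB
  set lam : ℝ := 64 * (t : ℝ) ^ 2 * ((t : ℝ) + 1) * lam₀ with hlamdef
  -- final cardinality bounds
  have hcard_even : ∀ i : Fin (2 * t + 1), (i : ℕ) % 2 = 0 →
      c / 2 * (T.n : ℝ) ≤ ((X' i).card : ℝ) := by
    intro i h1
    have h2 := hX'even i h1
    have h3 := hcard i
    linarith
  have hcard_odd : ∀ i : Fin (2 * t + 1), (i : ℕ) % 2 = 1 →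
      1 / 4 * (T.n : ℝ) ^ eps ≤ ((X' i).card : ℝ) := by
    intro i h1
    have hibd := i.isLt
    have hrt : (i : ℕ) / 2 < t := by omega
    have h2 := hB3 ((i : ℕ) / 2) hrt
    have h3 := hX'odd i h1
    nlinarith [hbig]
  have hne' : ∀ i, (X' i).Nonempty := by
    intro i
    rw [← Finset.card_pos]
    have h9 : (0 : ℝ) < ((X' i).card : ℝ) := by
      rcases Nat.even_or_odd (i : ℕ) with he | ho
      · have := hcard_even i (Nat.even_iff.mp he)
        nlinarith
      · have := hcard_odd i (Nat.odd_iff.mp ho)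
        nlinarith
    exact_mod_cast h9
  have hdisj' : ∀ i j, i ≠ j → Disjoint (X' i) (X' j) :=
    fun i j hij => (hdisj i j hij).mono (hX'sub i) (hX'sub j)
  have hdens' : ∀ i j : Fin (2 * t + 1), i < j → 1 - lam ≤ T.density (X' i) (X' j) := by
    intro i j hij
    apply T.densityOfBack _ _ (hdisj' i j (ne_of_lt hij)) (hne' i) (hne' j)
    have hsum : (((X' j) ×ˢ (X' i)).filter fun p => T.adj p.1 p.2).card
        = ∑ v ∈ X' i, ((X' j).filter fun w => T.adj w v).card :=
      prodFilterSumRight (X' j) (X' i) T.adj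
    calc ((((X' j) ×ˢ (X' i)).filter fun p => T.adj p.1 p.2).card : ℝ)
        = ∑ v ∈ X' i, ((((X' j).filter fun w => T.adj w v).card : ℕ) : ℝ) := by
          exact_mod_cast congrArg (Nat.cast (R := ℝ)) hsum
      _ ≤ ∑ _v ∈ X' i, lam * ((X' j).card : ℝ) :=
          Finset.sum_le_sum (fun v hv => key1 i j hij v hv)
      _ = lam * ((X' i).card : ℝ) * ((X' j).card : ℝ) := by
          rw [Finset.sum_const, nsmul_eq_mul]; ring
  refine ⟨X', ⟨⟨hne', hdisj', hdens'⟩, ?_, ?_⟩, ?_⟩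
  · intro i hi
    exact hcard_even i hi
  · intro i hi
    have hibd := i.isLt
    refine ⟨T.transSubset (hX'B i hi) (hB2 ((i : ℕ) / 2) (by omega)), hcard_odd i hi⟩
  · intro i j hij
    constructor
    · intro v hv
      have hvnot : v ∉ X' j :=
        fun h => Finset.disjoint_left.mp (hdisj' i j (ne_of_lt hij)) hv h
      exact T.densitySingleLeftOfBack v (X' j) hvnot (hne' j) lam (key1 i j hij v hv)
    · intro w hw
      have hwnot : w ∉ X' i :=
        fun h => Finset.disjoint_left.mp (hdisj' i j (ne_of_lt hij)) h hw
      exact T.densitySingleRightOfBack w (X' i) hwnot (hne' i) lam (key2 i j hij w hw)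
end

section
/- Let H be a tournament and let {W_1,…,W_a} and {L_1,…,L_b} be two partitions of V(H) into homogeneous sets. Then there do not exist indices k₁ ≠ k₂ and s₁ ≠ s₂ such that all four intersections W_{k₁} ∩ L_{s₁}, W_{k₁} ∩ L_{s₂}, W_{k₂} ∩ L_{s₁}, W_{k₂} ∩ L_{s₂} are nonempty. -/
open Finset

attribute [local instance] Classical.propDecidable

open Tournament


lemma stmt16_aux (H : Tournament) (A B C D : Finset (Fin H.n))
    (hA : H.IsHomogeneous A) (hB : H.IsHomogeneous B)
    (hC : H.IsHomogeneous C) (hD : H.IsHomogeneous D)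
    (x y z w : Fin H.n)
    (hxA : x ∈ A) (hxC : x ∈ C) (hyA : y ∈ A) (hyD : y ∈ D)
    (hzB : z ∈ B) (hzC : z ∈ C) (hwB : w ∈ B) (hwD : w ∈ D)
    (hxB : x ∉ B) (hzA : z ∉ A) (hzD : z ∉ D) (hwC : w ∉ C)
    (hxw : H.adj x w) : False := by
  -- x → z via homogeneity of B at x
  have hxz : H.adj x z := by
    rcases hB x hxB with h | h
    · exact h z hzB
    · exact absurd hxw (H.asymm _ _ (h w hwB))
  -- y → z via homogeneity of A at z
  have hyz : H.adj y z := by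
    rcases hA z hzA with h | h
    · exact absurd hxz (H.asymm _ _ (h x hxA))
    · exact h y hyA
  -- w → z via homogeneity of D at z
  have hwz : H.adj w z := by
    rcases hD z hzD with h | h
    · exact absurd hyz (H.asymm _ _ (h y hyD))
    · exact h w hwD
  -- z → w via homogeneity of C at w
  have hzw : H.adj z w := by
    rcases hC w hwC with h | h
    · exact absurd hxw (H.asymm _ _ (h x hxC))
    · exact h z hzC
  exact H.asymm _ _ hwz hzw

/-- Let H be a tournament and {W_1,…,W_a}, {L_1,…,L_b} two partitions of V(H)
into homogeneous sets. Then there are no indices k₁ ≠ k₂ and s₁ ≠ s₂ such that all four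
intersections W_{k₁} ∩ L_{s₁}, W_{k₁} ∩ L_{s₂}, W_{k₂} ∩ L_{s₁}, W_{k₂} ∩ L_{s₂} are
nonempty. -/
theorem stmt16 (H : Tournament) (a b : ℕ)
    (W : Fin a → Finset (Fin H.n)) (L : Fin b → Finset (Fin H.n))
    (hWhom : ∀ i, H.IsHomogeneous (W i)) (hWne : ∀ i, (W i).Nonempty)
    (hWdis : ∀ i j, i ≠ j → Disjoint (W i) (W j)) (hWcov : ∀ v, ∃ i, v ∈ W i)
    (hLhom : ∀ i, H.IsHomogeneous (L i)) (hLne : ∀ i, (L i).Nonempty)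
    (hLdis : ∀ i j, i ≠ j → Disjoint (L i) (L j)) (hLcov : ∀ v, ∃ i, v ∈ L i) :
    ¬ ∃ (k₁ k₂ : Fin a) (s₁ s₂ : Fin b), k₁ ≠ k₂ ∧ s₁ ≠ s₂ ∧
      (W k₁ ∩ L s₁).Nonempty ∧ (W k₁ ∩ L s₂).Nonempty ∧
      (W k₂ ∩ L s₁).Nonempty ∧ (W k₂ ∩ L s₂).Nonempty := by
  rintro ⟨k₁, k₂, s₁, s₂, hk, hs, ⟨x, hx⟩, ⟨y, hy⟩, ⟨z, hz⟩, ⟨w, hw⟩⟩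
  simp only [Finset.mem_inter] at hx hy hz hw
  obtain ⟨hxW, hxL⟩ := hx
  obtain ⟨hyW, hyL⟩ := hy
  obtain ⟨hzW, hzL⟩ := hz
  obtain ⟨hwW, hwL⟩ := hw
  have dW := hWdis k₁ k₂ hk
  have dW' := hWdis k₂ k₁ hk.symm
  have dL := hLdis s₁ s₂ hs
  have dL' := hLdis s₂ s₁ hs.symm
  have hxB : x ∉ W k₂ := fun h => (Finset.disjoint_left.mp dW) hxW h
  have hzA : z ∉ W k₁ := fun h => (Finset.disjoint_left.mp dW') hzW h
  have hzD : z ∉ L s₂ := fun h => (Finset.disjoint_left.mp dL) hzL h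
  have hwC : w ∉ L s₁ := fun h => (Finset.disjoint_left.mp dL') hwL h
  have hwA : w ∉ W k₁ := fun h => (Finset.disjoint_left.mp dW') hwW h
  have hyB : y ∉ W k₂ := fun h => (Finset.disjoint_left.mp dW) hyW h
  have hyC : y ∉ L s₁ := fun h => (Finset.disjoint_left.mp dL') hyL h
  have hxD : x ∉ L s₂ := fun h => (Finset.disjoint_left.mp dL) hxL h
  have hne : x ≠ w := fun h => hxB (h ▸ hwW)
  rcases H.total x w hne with hxw | hwx
  · exact stmt16_aux H (W k₁) (W k₂) (L s₁) (L s₂) (hWhom k₁) (hWhom k₂)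
      (hLhom s₁) (hLhom s₂) x y z w hxW hxL hyW hyL hzW hzL hwW hwL
      hxB hzA hzD hwC hxw
  · exact stmt16_aux H (W k₂) (W k₁) (L s₂) (L s₁) (hWhom k₂) (hWhom k₁)
      (hLhom s₂) (hLhom s₁) w z y x hwW hwL hzW hzL hyW hyL hxW hxL
      hwA hyB hyC hxD hwx
end
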